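/- arXiv:1805.10436 — 3 statements merged into one kernel-verified Lean document; each statement's English description precedes it below -/
import Mathlib

section
/- Let α be irrational with convergent denominators (q_k), let k ≥ 1 and let Q ≥ 6 q_k. Then every connected component I of the circle ℝ/ℤ minus the points {α, 2α, …, q_k α} contains at least Q/(4 q_k) points of the form mα with q_k < m ≤ Q. -/
open Filter MeasureTheory

namespace Stmt11Aux
open GenContFract

noncomputable def RR (α : ℝ) (n : ℕ) : ℝ := (GenContFract.of α).dens n * α - (GenContFract.of α).nums n
noncomputable def SS (α : ℝ) (n : ℕ) : ℝ := (-1)^n * RR α n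

variable {α : ℝ}

lemma not_term (hα : Irrational α) (n : ℕ) : ¬(GenContFract.of α).TerminatedAt n := by
  intro h
  obtain ⟨q, hq⟩ := (terminates_iff_rat α).mp ⟨n, h⟩
  exact hα ⟨q, hq.symm⟩

lemma stream_ne_none (hα : Irrational α) (n : ℕ) : IntFractPair.stream α n ≠ none := by
  cases n with
  | zero => simp [IntFractPair.stream_zero]
  | succ m =>
      intro h
      exact not_term hα m (of_terminatedAt_n_iff_succ_nth_intFractPair_stream_eq_none.mpr h)

lemma exists_s_get (hα : Irrational α) (n : ℕ) :
    ∃ gp : Pair ℝ, (GenContFract.of α).s.get? n = some gp ∧ gp.a = 1 ∧ 1 ≤ gp.b ∧ ∃ b : ℕ, gp.b = (b : ℝ) := by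
  obtain ⟨gp, hgp⟩ := Option.ne_none_iff_exists'.1
    ((not_congr terminatedAt_iff_s_none).mp (not_term hα n))
  refine ⟨gp, hgp, of_partNum_eq_one (partNum_eq_s_a hgp), of_one_le_get?_partDen (partDen_eq_s_b hgp), ?_⟩
  obtain ⟨z, hz⟩ := exists_int_eq_of_partDen (partDen_eq_s_b hgp)
  have h1 : (1:ℝ) ≤ (z:ℝ) := hz ▸ of_one_le_get?_partDen (partDen_eq_s_b hgp)
  have hz0 : 0 ≤ z := by exact_mod_cast le_trans zero_le_one h1
  exact ⟨z.toNat, by rw [hz]; exact_mod_cast (Int.toNat_of_nonneg hz0).symm⟩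

lemma one_le_dens (n : ℕ) : (1:ℝ) ≤ (GenContFract.of α).dens n := by
  induction n with
  | zero => simp [zeroth_den_eq_one]
  | succ m ih => exact le_trans ih of_den_mono

lemma exists_int (hα : Irrational α) (n : ℕ) :
    ∃ (p : ℤ) (q : ℕ), (GenContFract.of α).nums n = (p : ℝ) ∧ (GenContFract.of α).dens n = (q : ℝ) ∧ 1 ≤ q := by
  induction n using Nat.strong_induction_on with
  | _ n ih =>
    match n with
    | 0 => exact ⟨⌊α⌋, 1, by rw [zeroth_num_eq_h, of_h_eq_floor], by simp [zeroth_den_eq_one], le_refl 1⟩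
    | 1 =>
        obtain ⟨gp, hgp, ha, hb, b, hbb⟩ := exists_s_get hα 0
        refine ⟨b * ⌊α⌋ + 1, b, ?_, ?_, ?_⟩
        · rw [first_num_eq hgp, ha, hbb, of_h_eq_floor]; push_cast; ring
        · rw [first_den_eq hgp, hbb]
        · have : (1:ℝ) ≤ (b:ℝ) := hbb ▸ hb
          exact_mod_cast this
    | (m+2) =>
        obtain ⟨p1, q1, hp1, hq1, hq1'⟩ := ih (m+1) (by omega)
        obtain ⟨p0, q0, hp0, hq0, hq0'⟩ := ih m (by omega)
        obtain ⟨gp, hgp, ha, hb, b, hbb⟩ := exists_s_get hα (m+1)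
        refine ⟨b * p1 + p0, b * q1 + q0, ?_, ?_, by omega⟩
        · rw [nums_recurrence hgp hp0 hp1, ha, hbb]; push_cast; ring
        · rw [dens_recurrence hgp hq0 hq1, ha, hbb]; push_cast; ring

lemma fr_pos (hα : Irrational α) {n : ℕ} {ifp : IntFractPair ℝ}
    (h : IntFractPair.stream α n = some ifp) : 0 < ifp.fr := by
  rcases lt_or_eq_of_le (IntFractPair.nth_stream_fr_nonneg h) with h' | h'
  · exact h'
  · exfalso
    exact stream_ne_none hα (n+1)
      (IntFractPair.succ_nth_stream_eq_none_iff.mpr (Or.inr ⟨ifp, h, h'.symm⟩))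

lemma SS_pos (hα : Irrational α) (n : ℕ) : 0 < SS α n := by
  obtain ⟨ifp, hifp⟩ := Option.ne_none_iff_exists'.1 (stream_ne_none hα n)
  have hfr : ifp.fr ≠ 0 := ne_of_gt (fr_pos hα hifp)
  have key := sub_convs_eq hifp
  simp only [if_neg hfr] at key
  have hB : (GenContFract.of α).dens n = ((GenContFract.of α).contsAux (n+1)).b := by
    rw [den_eq_conts_b, nth_cont_eq_succ_nth_contAux]
  have hBpos : (0:ℝ) < ((GenContFract.of α).contsAux (n+1)).b := hB ▸ lt_of_lt_of_le one_pos (hB ▸ one_le_dens n)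
  have hpB : (0:ℝ) ≤ ((GenContFract.of α).contsAux n).b := zero_le_of_contsAux_b
  have hfrinv : (0:ℝ) < ifp.fr⁻¹ := inv_pos.mpr (fr_pos hα hifp)
  have hdenpos : (0:ℝ) < ((GenContFract.of α).contsAux (n+1)).b * (ifp.fr⁻¹ * ((GenContFract.of α).contsAux (n+1)).b + ((GenContFract.of α).contsAux n).b) := by
    apply mul_pos hBpos
    have := mul_pos hfrinv hBpos
    linarith
  have hconv : α - (GenContFract.of α).convs n = (-1)^n / (((GenContFract.of α).contsAux (n+1)).b * (ifp.fr⁻¹ * ((GenContFract.of α).contsAux (n+1)).b + ((GenContFract.of α).contsAux n).b)) := key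
  have hdn : (0:ℝ) < (GenContFract.of α).dens n := lt_of_lt_of_le one_pos (one_le_dens n)
  have hRR : RR α n = (GenContFract.of α).dens n * (α - (GenContFract.of α).convs n) := by
    rw [conv_eq_num_div_den]
    unfold RR
    rw [mul_sub, mul_div_cancel₀ _ (ne_of_gt hdn)]
  have e2 : ((-1:ℝ))^n * ((-1:ℝ))^n = 1 := by
    rw [← pow_add]
    exact Even.neg_one_pow (Even.add_self n)
  rw [SS, hRR, hconv]
  have hrw : ((-1:ℝ))^n * ((GenContFract.of α).dens n *
      ((-1) ^ n / (((GenContFract.of α).contsAux (n + 1)).b *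
        (ifp.fr⁻¹ * ((GenContFract.of α).contsAux (n + 1)).b + ((GenContFract.of α).contsAux n).b)))) =
      ((-1:ℝ))^n * ((-1:ℝ))^n * ((GenContFract.of α).dens n / (((GenContFract.of α).contsAux (n + 1)).b *
        (ifp.fr⁻¹ * ((GenContFract.of α).contsAux (n + 1)).b + ((GenContFract.of α).contsAux n).b))) := by
    ring
  rw [hrw, e2, one_mul]
  positivity


lemma abs_RR (hα : Irrational α) (n : ℕ) : |RR α n| = SS α n := by
  have h := SS_pos hα n
  have : |SS α n| = |RR α n| := by
    rw [SS, abs_mul, abs_pow, abs_neg, abs_one, one_pow, one_mul]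
  rw [← this, abs_of_pos h]

lemma det_SS (hα : Irrational α) (n : ℕ) :
    (GenContFract.of α).dens (n+1) * SS α n + (GenContFract.of α).dens n * SS α (n+1) = 1 := by
  have h : (GenContFract.of α).nums n * (GenContFract.of α).dens (n+1) -
      (GenContFract.of α).dens n * (GenContFract.of α).nums (n+1) = (-1)^(n+1) :=
    SimpContFract.determinant (s := SimpContFract.of α) (not_term hα n)
  have e2 : ((-1:ℝ))^n * ((-1:ℝ))^n = 1 := by
    rw [← pow_add]; exact Even.neg_one_pow (Even.add_self n)
  have hs : ((-1:ℝ))^(n+1) = -((-1:ℝ))^n := by rw [pow_succ]; ring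
  unfold SS RR
  rw [hs] at h ⊢
  linear_combination (-((-1:ℝ)^n)) * h + e2

lemma SS_rec (hα : Irrational α) (n : ℕ) : ∃ b : ℕ, 1 ≤ b ∧
    (GenContFract.of α).dens (n+2) = b * (GenContFract.of α).dens (n+1) + (GenContFract.of α).dens n ∧
    SS α (n+2) = SS α n - b * SS α (n+1) := by
  obtain ⟨gp, hgp, ha, hb, b, hbb⟩ := exists_s_get hα (n+1)
  have hbn : (1:ℝ) ≤ (b:ℝ) := hbb ▸ hb
  have hd : (GenContFract.of α).dens (n+2) =
      b * (GenContFract.of α).dens (n+1) + (GenContFract.of α).dens n := by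
    rw [dens_recurrence hgp rfl rfl, ha, hbb]; ring
  have hn : (GenContFract.of α).nums (n+2) =
      b * (GenContFract.of α).nums (n+1) + (GenContFract.of α).nums n := by
    rw [nums_recurrence hgp rfl rfl, ha, hbb]; ring
  refine ⟨b, by exact_mod_cast hbn, hd, ?_⟩
  have hs1 : ((-1:ℝ))^(n+1) = -((-1:ℝ))^n := by rw [pow_succ]; ring
  have hs2 : ((-1:ℝ))^(n+2) = ((-1:ℝ))^n := by rw [pow_add]; ring
  unfold SS RR
  rw [hd, hn, hs1, hs2]
  ring

lemma SS_anti (hα : Irrational α) (n : ℕ) : SS α (n+1) < SS α n := by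
  obtain ⟨b, hb1, _, hrec⟩ := SS_rec hα n
  have h2 := SS_pos hα (n+2)
  have h1 := SS_pos hα (n+1)
  have hb : (1:ℝ) ≤ (b:ℝ) := by exact_mod_cast hb1
  nlinarith [hrec]

lemma SS_anti_le (hα : Irrational α) {m n : ℕ} (h : m ≤ n) : SS α n ≤ SS α m := by
  induction n with
  | zero => simp_all
  | succ p ih =>
      rcases Nat.lt_or_ge m (p+1) with h' | h'
      · exact le_trans (le_of_lt (SS_anti hα p)) (ih (by omega))
      · have : m = p + 1 := by omega
        subst this; rfl

lemma SS_lt_one (hα : Irrational α) (n : ℕ) : SS α n < 1 := by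
  have h := det_SS hα n
  have h1 := SS_pos hα n
  have h2 := SS_pos hα (n+1)
  have hd1 := one_le_dens (α := α) (n+1)
  have hd0 := one_le_dens (α := α) n
  nlinarith

lemma same_sign_bound {x y qz qz' d : ℤ} (hxy : 0 < x*y) (hx0 : x ≠ 0)
    (hq : 1 ≤ qz) (hq' : 1 ≤ qz') (hd : x*qz + y*qz' = d) : qz + qz' ≤ |d| := by
  rcases lt_trichotomy x 0 with hx | hx | hx
  · have hy : y < 0 := by nlinarith
    have hd2 : d ≤ -(qz + qz') := by
      rw [← hd]
      have h1 : x ≤ -1 := by omega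
      have h2 : y ≤ -1 := by omega
      nlinarith
    exact le_abs.mpr (Or.inr (by linarith))
  · exact absurd hx hx0
  · have hy : 0 < y := by nlinarith
    have hd2 : qz + qz' ≤ d := by
      rw [← hd]
      have h1 : 1 ≤ x := by omega
      have h2 : 1 ≤ y := by omega
      nlinarith
    exact le_abs.mpr (Or.inl hd2)

lemma best_approx (hα : Irrational α) (K : ℕ) (d nn : ℤ) (hd : d ≠ 0)
    (hdq : |(d:ℝ)| < (GenContFract.of α).dens (K+1)) :
    SS α K ≤ |(d:ℝ)*α - (nn:ℝ)| := by
  obtain ⟨p, q, hp, hq, hq1⟩ := exists_int hα (K+1)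
  obtain ⟨p', q', hp', hq', hq1'⟩ := exists_int hα K
  -- determinant over ℤ
  have hdetR : (GenContFract.of α).nums K * (GenContFract.of α).dens (K+1) -
      (GenContFract.of α).dens K * (GenContFract.of α).nums (K+1) = (-1)^(K+1) :=
    SimpContFract.determinant (s := SimpContFract.of α) (not_term hα K)
  set e : ℤ := (-1)^(K+1) with he_def
  have he : e * e = 1 := by
    rw [he_def, ← pow_add]; exact Even.neg_one_pow (Even.add_self (K+1))
  have hdet : p' * q - q' * p = e := by
    have h2 : ((p' : ℤ) : ℝ) * ((q:ℕ) : ℝ) - ((q' : ℕ) : ℝ) * ((p : ℤ) : ℝ) = (-1:ℝ)^(K+1) := by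
      rw [← hp, ← hq, ← hp', ← hq']; exact hdetR
    have h3 : ((p' * q - q' * p : ℤ) : ℝ) = (((-1)^(K+1) : ℤ) : ℝ) := by push_cast; push_cast at h2; linarith
    rw [he_def]
    exact_mod_cast h3
  set x : ℤ := e * (d * p' - nn * q') with hx_def
  set y : ℤ := e * (nn * q - d * p) with hy_def
  have hxq : x * q + y * q' = d := by rw [hx_def, hy_def]; linear_combination (e*d)*hdet + d*he
  have hxp : x * p + y * p' = nn := by rw [hx_def, hy_def]; linear_combination (e*nn)*hdet + nn*he
  have hq_cast : ((q:ℕ):ℝ) = (GenContFract.of α).dens (K+1) := hq.symm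
  have hval : (d:ℝ)*α - (nn:ℝ) = (x:ℝ) * RR α (K+1) + (y:ℝ) * RR α K := by
    have h1 : ((x * q + y * q' : ℤ) : ℝ) = (d:ℝ) := by exact_mod_cast congrArg (fun z : ℤ => (z:ℝ)) hxq
    have h2 : ((x * p + y * p' : ℤ) : ℝ) = (nn:ℝ) := by exact_mod_cast congrArg (fun z : ℤ => (z:ℝ)) hxp
    push_cast at h1 h2
    unfold RR
    rw [hp, hq, hp', hq']
    push_cast
    linear_combination (-α) * h1 + h2
  clear_value x y e
  clear hx_def hy_def he_def
  have hRK := SS_pos hα K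
  have hRK1 := SS_pos hα (K+1)
  rcases eq_or_ne y 0 with hy0 | hy0
  · -- y = 0 impossible
    exfalso
    rw [hy0, zero_mul, add_zero] at hxq
    have hx0 : x ≠ 0 := by rintro rfl; simp at hxq; omega
    have : (q:ℤ) ≤ |d| := by
      rw [← hxq, abs_mul, Int.abs_natCast]
      have : 1 ≤ |x| := Int.one_le_abs hx0
      nlinarith [(by positivity : (0:ℤ) ≤ (q:ℤ))]
    have h9 : ((q:ℕ):ℝ) ≤ |(d:ℝ)| := by
      rw [← Int.cast_abs]; exact_mod_cast this
    rw [hq_cast] at h9; linarith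
  rcases eq_or_ne x 0 with hx0 | hx0
  · rw [hx0] at hval
    simp only [Int.cast_zero, zero_mul, zero_add] at hval
    rw [hval, abs_mul, abs_RR hα]
    have : (1:ℝ) ≤ |(y:ℝ)| := by
      rw [← Int.cast_abs]; exact_mod_cast Int.one_le_abs hy0
    nlinarith
  -- both nonzero
  rcases lt_trichotomy (x * y) 0 with hxy | hxy | hxy
  · -- opposite signs: good case
    have hprod : RR α (K+1) * RR α K < 0 := by
      have e2 : ((-1:ℝ))^K * ((-1:ℝ))^K = 1 := by
        rw [← pow_add]; exact Even.neg_one_pow (Even.add_self K)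
      have hssp : SS α (K+1) * SS α K = -(RR α (K+1) * RR α K) := by
        unfold SS
        rw [pow_succ]
        linear_combination (-(RR α (K+1) * RR α K)) * e2
      nlinarith
    set u := (x:ℝ) * RR α (K+1) with hu_def
    set v := (y:ℝ) * RR α K with hv_def
    have hxyR : (x:ℝ) * (y:ℝ) < 0 := by exact_mod_cast hxy
    have huv : 0 < u * v := by
      have : u * v = ((x:ℝ) * (y:ℝ)) * (RR α (K+1) * RR α K) := by rw [hu_def, hv_def]; ring
      rw [this]
      exact mul_pos_of_neg_of_neg hxyR hprod
    have hvabs : SS α K ≤ |v| := by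
      rw [hv_def, abs_mul, abs_RR hα]
      have : (1:ℝ) ≤ |(y:ℝ)| := by
        rw [← Int.cast_abs]; exact_mod_cast Int.one_le_abs hy0
      nlinarith
    have : |v| ≤ |u + v| := by
      rcases lt_trichotomy v 0 with hv | hv | hv
      · have hu : u < 0 := by nlinarith
        rw [abs_of_neg hv, abs_of_neg (by linarith : u + v < 0)]; linarith
      · simp [hv]
      · have hu : 0 < u := by nlinarith
        rw [abs_of_pos hv, abs_of_pos (by linarith : 0 < u + v)]; linarith
    rw [hval]
    exact le_trans hvabs this
  · exfalso
    rcases mul_eq_zero.mp hxy with h | h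
    · exact hx0 h
    · exact hy0 h
  · -- same sign: impossible
    exfalso
    have hq1z : (1:ℤ) ≤ (q:ℤ) := by exact_mod_cast hq1
    have hq1z' : (1:ℤ) ≤ (q':ℤ) := by exact_mod_cast hq1'
    have habs : (q:ℤ) + q' ≤ |d| := same_sign_bound hxy hx0 hq1z hq1z' hxq
    have h1 : (((q:ℤ) + q' : ℤ) : ℝ) ≤ |(d:ℝ)| := by
      rw [← Int.cast_abs]
      exact_mod_cast habs
    push_cast at h1
    rw [hq_cast] at h1
    have h3 : (1:ℝ) ≤ ((q':ℕ):ℝ) := by exact_mod_cast hq1'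
    linarith


lemma walk (β : ℝ) (hβ : 0 < β) (P : ℕ) (h : 1 < P * β) (c : ℝ) :
    ∃ (j : ℕ) (m : ℤ), 1 ≤ j ∧ j ≤ P ∧ c ≤ j * β - m ∧ j * β - m ≤ c + β := by
  have hP : 1 ≤ P := by
    by_contra hc
    push_neg at hc
    interval_cases P
    simp at h
    linarith
  have hc_eq : (⌊c⌋ : ℝ) + Int.fract c = c := Int.floor_add_fract c
  set f := Int.fract c with hf
  have hf0 : 0 ≤ f := Int.fract_nonneg c
  have hf1 : f < 1 := Int.fract_lt_one c
  rcases eq_or_lt_of_le hf0 with h0 | h0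
  · refine ⟨1, -⌊c⌋, le_refl 1, hP, ?_, ?_⟩ <;> push_cast <;> linarith
  · set jz : ℤ := ⌈f / β⌉ with hjz
    have hjz1 : 1 ≤ jz := Int.ceil_pos.mpr (div_pos h0 hβ)
    have hjzP : jz ≤ (P:ℤ) := by
      rw [hjz]
      apply Int.ceil_le.mpr
      rw [div_le_iff₀ hβ]
      push_cast
      linarith
    have hlow : f ≤ jz * β := by
      have h1 := Int.le_ceil (f / β)
      calc f = (f / β) * β := by field_simp
        _ ≤ jz * β := by nlinarith
    have hhigh : jz * β < f + β := by
      have h1 := Int.ceil_lt_add_one (f / β)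
      have h2 : jz * β < (f / β + 1) * β := by
        apply mul_lt_mul_of_pos_right h1 hβ
      calc jz * β < (f / β + 1) * β := h2
        _ = f + β := by field_simp
    refine ⟨jz.toNat, -⌊c⌋, by omega, by omega, ?_, ?_⟩ <;>
      have hcast : ((jz.toNat : ℕ) : ℝ) = (jz : ℝ) := by exact_mod_cast Int.toNat_of_nonneg (by omega)
    · rw [hcast]; push_cast; linarith
    · rw [hcast]; push_cast; linarith

set_option maxHeartbeats 2000000 in
lemma covering (hα : Irrational α) (k : ℕ) (hk : 1 ≤ k) (c : ℝ) :
    ∃ (j : ℕ) (n : ℤ), 1 ≤ j ∧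
      (j:ℝ) ≤ (GenContFract.of α).dens k + (GenContFract.of α).dens (k-1) ∧
      c ≤ j * α - n ∧ j * α - n ≤ c + SS α (k-1) := by
  induction k generalizing c with
  | zero => omega
  | succ k ih =>
    simp only [Nat.add_sub_cancel]
    by_cases hone : (GenContFract.of α).dens k = 1
    · -- base case: dens k = 1, use the pure walk
      obtain ⟨p', q', hp', hq', _⟩ := exists_int hα k
      obtain ⟨p, q, hp, hq, hq1⟩ := exists_int hα (k+1)
      have hβ := SS_pos hα k
      set β := SS α k with hβdef
      have hPβ : 1 < ((q + 1 : ℕ):ℝ) * β := by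
        have hdet := det_SS hα k
        rw [hone, hq] at hdet
        have hanti := SS_anti hα k
        push_cast
        nlinarith
      have hRReq : (p' : ℝ) = α - RR α k := by
        have : RR α k = (GenContFract.of α).dens k * α - (GenContFract.of α).nums k := rfl
        rw [this, hone, hp']; ring
      rcases Nat.even_or_odd k with hpar | hpar
      · have hRRS : RR α k = β := by
          rw [hβdef, SS, Even.neg_one_pow hpar, one_mul]
        obtain ⟨j, m, hj1, hjP, hl, hh⟩ := walk β hβ (q+1) hPβ c
        refine ⟨j, j * p' + m, hj1, ?_, ?_, ?_⟩
        · rw [hq, hone]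
          push_cast
          exact_mod_cast (by push_cast; linarith [(by exact_mod_cast hjP : (j:ℝ) ≤ (q:ℝ) + 1)] : (j:ℝ) ≤ (q:ℝ) + 1)
        · push_cast
          have : (j:ℝ) * α - ((j:ℝ) * p' + m) = (j:ℝ) * β - m := by
            rw [hRReq, ← hRRS]; ring
          linarith
        · push_cast
          have : (j:ℝ) * α - ((j:ℝ) * p' + m) = (j:ℝ) * β - m := by
            rw [hRReq, ← hRRS]; ring
          linarith
      · have hRRS : RR α k = -β := by
          rw [hβdef, SS, Odd.neg_one_pow hpar]; ring
        obtain ⟨j, m, hj1, hjP, hl, hh⟩ := walk β hβ (q+1) hPβ (-c - β)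
        refine ⟨j, j * p' - m, hj1, ?_, ?_, ?_⟩
        · rw [hq, hone]
          exact_mod_cast (by push_cast; linarith [(by exact_mod_cast hjP : (j:ℝ) ≤ (q:ℝ) + 1)] : (j:ℝ) ≤ (q:ℝ) + 1)
        · push_cast
          have : (j:ℝ) * α - ((j:ℝ) * p' - m) = -((j:ℝ) * β - m) := by
            rw [hRReq, ← neg_eq_iff_eq_neg.mpr hRRS]; ring
          linarith
        · push_cast
          have : (j:ℝ) * α - ((j:ℝ) * p' - m) = -((j:ℝ) * β - m) := by
            rw [hRReq, ← neg_eq_iff_eq_neg.mpr hRRS]; ring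
          linarith
    · -- inductive step
      obtain ⟨pk, qk, hpk, hqk, hqk1⟩ := exists_int hα k
      have hk1 : 1 ≤ k := by
        rcases Nat.eq_zero_or_pos k with h0 | h0
        · exfalso; apply hone; rw [h0]; exact zeroth_den_eq_one
        · exact h0
      obtain ⟨b, hb1, hbd, hbS⟩ := SS_rec hα (k-1)
      have e1 : k - 1 + 1 = k := by omega
      have e2 : k - 1 + 2 = k + 1 := by omega
      rw [e1, e2] at hbd hbS
      have hδ := SS_pos hα k
      have hη := SS_pos hα (k-1)
      set δ := SS α k with hδdef
      set η := SS α (k-1) with hηdef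
      have hanti : SS α (k+1) < δ := by
        have h1 := SS_anti hα k
        exact h1
      have hηb : η < ((b:ℝ) + 1) * δ := by
        have := SS_pos hα (k+1)
        nlinarith [hbS]
      have hRRk : (qk : ℝ) * α - pk = RR α k := by
        rw [RR, hqk, hpk]
      rcases Nat.even_or_odd k with hpar | hpar
      · -- even: RR α k = δ, move up; start lower
        have hRRS : RR α k = δ := by rw [hδdef, SS, Even.neg_one_pow hpar, one_mul]
        obtain ⟨j₀, n₀, hj₀1, hj₀b, hlow, hhigh⟩ := ih hk1 (c + δ - η)
        set w := (j₀:ℝ) * α - n₀ - (c + δ - η) with hw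
        have hw0 : 0 ≤ w := by rw [hw]; linarith
        have hwη : w ≤ η := by rw [hw]; linarith
        set tz : ℤ := ⌊(η - w)/δ⌋ with htz
        have htz0 : 0 ≤ tz := Int.floor_nonneg.mpr (div_nonneg (by linarith) (le_of_lt hδ))
        have htzb : tz ≤ (b:ℤ) := by
          have hlt : (η - w)/δ < (((b:ℤ) + 1 : ℤ):ℝ) := by
            rw [div_lt_iff₀ hδ]; push_cast; nlinarith
          have := Int.floor_lt.mpr hlt
          omega
        have hfl_le : (tz:ℝ) * δ ≤ η - w := by
          have h1 := Int.floor_le ((η - w)/δ)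
          rw [← htz] at h1
          calc (tz:ℝ)*δ ≤ ((η-w)/δ)*δ := by nlinarith
            _ = η - w := by field_simp
        have hfl_lt : η - w - (tz:ℝ)*δ < δ := by
          have h1 := Int.lt_floor_add_one ((η - w)/δ)
          rw [← htz] at h1
          have h2 : η - w < ((tz:ℝ) + 1) * δ := by
            calc η - w = ((η - w)/δ) * δ := by field_simp
              _ < ((tz:ℝ) + 1) * δ := by apply mul_lt_mul_of_pos_right h1 hδ
          nlinarith
        have h5 : (qk:ℝ)*α - (pk:ℝ) = δ := by rw [hRRk]; exact hRRS
        clear_value tz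
        lift tz to ℕ using htz0 with t ht
        have key : ((j₀ + t*qk:ℕ):ℝ)*α - ((n₀ + t*pk:ℤ):ℝ) =
            ((j₀:ℝ)*α - (n₀:ℝ)) + ((t:ℕ):ℝ)*((qk:ℝ)*α - (pk:ℝ)) := by
          push_cast
          ring
        refine ⟨j₀ + t * qk, n₀ + t * pk, by omega, ?_, ?_, ?_⟩
        · push_cast [← hqk]
          rw [hbd]
          have hbt : ((t:ℕ):ℝ) ≤ (b:ℝ) := by exact_mod_cast htzb
          have hdk : (1:ℝ) ≤ (GenContFract.of α).dens k := one_le_dens k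
          nlinarith
        · have hw2 : w = (j₀:ℝ) * α - (n₀:ℝ) - (c + δ - η) := rfl
          rw [key, h5]; push_cast at hfl_le hfl_lt ⊢; linarith
        · have hw2 : w = (j₀:ℝ) * α - (n₀:ℝ) - (c + δ - η) := rfl
          rw [key, h5]; push_cast at hfl_le hfl_lt ⊢; linarith
      · -- odd: RR α k = -δ, move down
        have hRRS : RR α k = -δ := by rw [hδdef, SS, Odd.neg_one_pow hpar]; ring
        obtain ⟨j₀, n₀, hj₀1, hj₀b, hlow, hhigh⟩ := ih hk1 c
        set w := (j₀:ℝ) * α - n₀ - c with hw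
        have hw0 : 0 ≤ w := by rw [hw]; linarith
        have hwη : w ≤ η := by rw [hw]; linarith
        set tz : ℤ := ⌊w/δ⌋ with htz
        have htz0 : 0 ≤ tz := Int.floor_nonneg.mpr (div_nonneg hw0 (le_of_lt hδ))
        have htzb : tz ≤ (b:ℤ) := by
          have hlt : w/δ < (((b:ℤ) + 1 : ℤ):ℝ) := by
            rw [div_lt_iff₀ hδ]; push_cast; nlinarith
          have := Int.floor_lt.mpr hlt
          omega
        have hfl_le : (tz:ℝ) * δ ≤ w := by
          have h1 := Int.floor_le (w/δ)
          rw [← htz] at h1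
          calc (tz:ℝ)*δ ≤ (w/δ)*δ := by nlinarith
            _ = w := by field_simp
        have hfl_lt : w - (tz:ℝ)*δ < δ := by
          have h1 := Int.lt_floor_add_one (w/δ)
          rw [← htz] at h1
          have h2 : w < ((tz:ℝ) + 1) * δ := by
            calc w = (w/δ) * δ := by field_simp
              _ < ((tz:ℝ) + 1) * δ := by apply mul_lt_mul_of_pos_right h1 hδ
          nlinarith
        have h5 : (qk:ℝ)*α - (pk:ℝ) = -δ := by rw [hRRk]; exact hRRS
        clear_value tz
        lift tz to ℕ using htz0 with t ht
        have key : ((j₀ + t*qk:ℕ):ℝ)*α - ((n₀ + t*pk:ℤ):ℝ) =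
            ((j₀:ℝ)*α - (n₀:ℝ)) + ((t:ℕ):ℝ)*((qk:ℝ)*α - (pk:ℝ)) := by
          push_cast
          ring
        refine ⟨j₀ + t * qk, n₀ + t * pk, by omega, ?_, ?_, ?_⟩
        · push_cast [← hqk]
          rw [hbd]
          have hbt : ((t:ℕ):ℝ) ≤ (b:ℝ) := by exact_mod_cast htzb
          have hdk : (1:ℝ) ≤ (GenContFract.of α).dens k := one_le_dens k
          nlinarith
        · have hw2 : w = (j₀:ℝ) * α - (n₀:ℝ) - c := rfl
          rw [key, h5]; push_cast at hfl_le hfl_lt ⊢; linarith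
        · have hw2 : w = (j₀:ℝ) * α - (n₀:ℝ) - c := rfl
          rw [key, h5]; push_cast at hfl_le hfl_lt ⊢; linarith


lemma irr_ne (hα : Irrational α) (d n : ℤ) (hd : d ≠ 0) : (d:ℝ) * α ≠ (n:ℝ) := by
  intro h
  have hdR : (d:ℝ) ≠ 0 := Int.cast_ne_zero.mpr hd
  have hα_eq : α = (n:ℝ)/(d:ℝ) := by field_simp; linarith
  apply hα
  exact ⟨(n:ℚ)/(d:ℚ), by push_cast; rw [hα_eq]⟩

lemma coe_eq_iff {y z : ℝ} : ((y : ℝ) : UnitAddCircle) = ((z : ℝ) : UnitAddCircle) ↔ ∃ n : ℤ, y - z = (n:ℝ) := by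
  constructor
  · intro h
    rw [QuotientAddGroup.eq_iff_sub_mem, AddSubgroup.mem_zmultiples_iff] at h
    obtain ⟨n, hn⟩ := h
    exact ⟨n, by rw [← hn]; simp⟩
  · rintro ⟨n, hn⟩
    rw [QuotientAddGroup.eq_iff_sub_mem, AddSubgroup.mem_zmultiples_iff]
    exact ⟨n, by rw [hn]; simp⟩


end Stmt11Aux

/-- The denominator `q_k` of the `k`-th continued fraction convergent of `α`. -/
noncomputable def cfDen (α : ℝ) (k : ℕ) : ℝ := (GenContFract.of α).dens k

/-- The finite set `{α, 2α, …, q_k α}` on the circle `ℝ/ℤ`. -/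
noncomputable def orbitPts (α : ℝ) (k : ℕ) : Set UnitAddCircle :=
  {p | ∃ m : ℕ, 1 ≤ m ∧ (m : ℝ) ≤ cfDen α k ∧ p = ((m * α : ℝ) : UnitAddCircle)}

set_option maxHeartbeats 2000000 in
theorem stmt11 (α : ℝ) (hα : Irrational α) (k : ℕ) (hk : 1 ≤ k)
    (Q : ℝ) (hQ : 6 * cfDen α k ≤ Q) :
    ∀ x : UnitAddCircle, x ∈ (orbitPts α k)ᶜ →
      Q / (4 * cfDen α k) ≤
        ({m : ℕ | cfDen α k < (m : ℝ) ∧ (m : ℝ) ≤ Q ∧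
          ((m * α : ℝ) : UnitAddCircle) ∈ connectedComponentIn (orbitPts α k)ᶜ x}.ncard : ℝ) := by
  classical
  intro x hx
  open Stmt11Aux in
  obtain ⟨pInt, q, hpInt, hq, hq1⟩ := Stmt11Aux.exists_int hα k
  obtain ⟨p', q', hp', hq', hq1'⟩ := Stmt11Aux.exists_int hα (k-1)
  have e1 : k - 1 + 1 = k := by omega
  have hcf : cfDen α k = (GenContFract.of α).dens k := rfl
  set η := Stmt11Aux.SS α (k-1) with hηdef
  have hηpos : 0 < η := Stmt11Aux.SS_pos hα (k-1)
  have hηlt1 : η < 1 := Stmt11Aux.SS_lt_one hα (k-1)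
  -- lift x to a real number ξ
  obtain ⟨ξ, rfl⟩ := QuotientAddGroup.mk'_surjective (AddSubgroup.zmultiples (1:ℝ)) x
  have hxcoe : (QuotientAddGroup.mk' (AddSubgroup.zmultiples (1:ℝ))) ξ = ((ξ : ℝ) : UnitAddCircle) := rfl
  rw [hxcoe] at hx ⊢
  -- x is not an orbit point: no integer translate of mα equals ξ
  have hnotint : ∀ m : ℕ, 1 ≤ m → (m:ℝ) ≤ (GenContFract.of α).dens k →
      ∀ n : ℤ, (m:ℝ) * α - ξ ≠ (n:ℝ) := by
    intro m hm1 hm2 n hcontra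
    apply hx
    refine ⟨m, hm1, by rw [hcf]; exact hm2, ?_⟩
    rw [Stmt11Aux.coe_eq_iff]
    exact ⟨-n, by push_cast; linarith⟩
  -- the lift functions
  set Fm : ℕ → ℝ := fun m => (m:ℝ) * α - (⌊(m:ℝ) * α - ξ⌋ + 1 : ℤ) with hFm
  set Gm : ℕ → ℝ := fun m => (m:ℝ) * α - (⌈(m:ℝ) * α - ξ⌉ - 1 : ℤ) with hGm
  have hFlt : ∀ m : ℕ, Fm m < ξ := by
    intro m
    have h1 := Int.lt_floor_add_one ((m:ℝ) * α - ξ)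
    simp only [hFm]
    push_cast
    linarith
  have hGgt : ∀ m : ℕ, ξ < Gm m := by
    intro m
    have h1 := Int.ceil_lt_add_one ((m:ℝ) * α - ξ)
    simp only [hGm]
    push_cast
    linarith
  -- maximality: any orbit lift below ξ is ≤ Fm m, any above ξ is ≥ Gm m
  have hFmax : ∀ (m : ℕ) (n : ℤ), (m:ℝ) * α - n < ξ → (m:ℝ) * α - n ≤ Fm m := by
    intro m n h
    have : ⌊(m:ℝ) * α - ξ⌋ < n := Int.floor_lt.mpr (by linarith)
    have : (⌊(m:ℝ) * α - ξ⌋ + 1 : ℤ) ≤ n := by omega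
    have hcast : ((⌊(m:ℝ) * α - ξ⌋ + 1 : ℤ):ℝ) ≤ (n:ℝ) := by exact_mod_cast this
    simp only [hFm]
    push_cast at hcast ⊢
    linarith
  have hGmin : ∀ (m : ℕ) (n : ℤ), ξ < (m:ℝ) * α - n → Gm m ≤ (m:ℝ) * α - n := by
    intro m n h
    have : n < ⌈(m:ℝ) * α - ξ⌉ := Int.lt_ceil.mpr (by linarith)
    have : n ≤ (⌈(m:ℝ) * α - ξ⌉ - 1 : ℤ) := by omega
    have hcast : (n:ℝ) ≤ ((⌈(m:ℝ) * α - ξ⌉ - 1 : ℤ):ℝ) := by exact_mod_cast this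
    simp only [hGm]
    push_cast at hcast ⊢
    linarith
  -- define a and b
  have hTne : (Finset.Icc 1 q).Nonempty := ⟨1, Finset.mem_Icc.mpr ⟨le_refl 1, hq1⟩⟩
  have hTFne : ((Finset.Icc 1 q).image Fm).Nonempty := hTne.image Fm
  have hTGne : ((Finset.Icc 1 q).image Gm).Nonempty := hTne.image Gm
  set a := ((Finset.Icc 1 q).image Fm).max' hTFne with hadef
  set b := ((Finset.Icc 1 q).image Gm).min' hTGne with hbdef
  obtain ⟨m₁, hm₁T, hm₁⟩ := Finset.mem_image.mp (Finset.max'_mem _ hTFne)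
  obtain ⟨m₂, hm₂T, hm₂⟩ := Finset.mem_image.mp (Finset.min'_mem _ hTGne)
  rw [← hadef] at hm₁
  rw [← hbdef] at hm₂
  rw [Finset.mem_Icc] at hm₁T hm₂T
  have haξ : a < ξ := by rw [← hm₁]; exact hFlt m₁
  have hξb : ξ < b := by rw [← hm₂]; exact hGgt m₂
  -- every orbit lift avoids (a,b)
  have havoid : ∀ (m : ℕ), 1 ≤ m → m ≤ q → ∀ (n : ℤ), (m:ℝ) * α - n ≤ a ∨ b ≤ (m:ℝ) * α - n := by
    intro m hm1 hmq n
    have hmT : m ∈ Finset.Icc 1 q := Finset.mem_Icc.mpr ⟨hm1, hmq⟩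
    rcases lt_trichotomy ((m:ℝ) * α - n) ξ with h | h | h
    · left
      exact le_trans (hFmax m n h) (Finset.le_max' _ _ (Finset.mem_image_of_mem Fm hmT))
    · exfalso
      exact hnotint m hm1 (by rw [hq]; exact_mod_cast hmq) n (by linarith)
    · right
      exact le_trans (Finset.min'_le _ _ (Finset.mem_image_of_mem Gm hmT)) (hGmin m n h)
  -- gap lower bound: η ≤ b - a
  have hgap : η ≤ b - a := by
    have ha_eq : a = (m₁:ℝ) * α - (⌊(m₁:ℝ) * α - ξ⌋ + 1 : ℤ) := by rw [← hm₁]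
    have hb_eq : b = (m₂:ℝ) * α - (⌈(m₂:ℝ) * α - ξ⌉ - 1 : ℤ) := by rw [← hm₂]
    set n₁ : ℤ := ⌊(m₁:ℝ) * α - ξ⌋ + 1 with hn₁
    set n₂ : ℤ := ⌈(m₂:ℝ) * α - ξ⌉ - 1 with hn₂
    rcases eq_or_ne m₁ m₂ with hmm | hmm
    · -- same m: difference is a positive integer
      have hdiff : b - a = ((n₁ - n₂ : ℤ):ℝ) := by
        rw [ha_eq, hb_eq, hmm]
        push_cast
        ring
      have hpos : (0:ℝ) < ((n₁ - n₂ : ℤ):ℝ) := by rw [← hdiff]; linarith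
      have : (1:ℤ) ≤ n₁ - n₂ := by exact_mod_cast (by exact_mod_cast hpos : (0:ℤ) < n₁ - n₂)
      have : (1:ℝ) ≤ ((n₁ - n₂ : ℤ):ℝ) := by exact_mod_cast this
      rw [hdiff]
      linarith
    · -- different m: best approximation
      set d : ℤ := (m₂:ℤ) - (m₁:ℤ) with hd
      have hd0 : d ≠ 0 := by
        simp only [hd]
        intro hcon
        apply hmm
        omega
      have hdq : |(d:ℝ)| < (GenContFract.of α).dens k := by
        rw [hq]
        have h1 : (d:ℤ) ≤ (q:ℤ) - 1 := by simp only [hd]; omega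
        have h2 : -((q:ℤ) - 1) ≤ d := by simp only [hd]; omega
        have : |d| ≤ (q:ℤ) - 1 := abs_le.mpr ⟨h2, h1⟩
        have : (|d|:ℝ) ≤ ((q:ℤ):ℝ) - 1 := by exact_mod_cast this
        rw [← Int.cast_abs]
        push_cast at this ⊢
        linarith
      have hba := Stmt11Aux.best_approx hα (k-1) d (n₂ - n₁) hd0 (by rw [e1]; exact hdq)
      have hval : (d:ℝ) * α - ((n₂ - n₁:ℤ):ℝ) = b - a := by
        rw [ha_eq, hb_eq, hd]
        push_cast
        ring
      rw [hval] at hba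
      rw [abs_of_pos (by linarith : (0:ℝ) < b - a)] at hba
      exact hba
  -- the open arc (a,b) maps into the complement and hence into the component
  set G : Set UnitAddCircle := (fun r : ℝ => ((r : ℝ) : UnitAddCircle)) '' Set.Ioo a b with hGdef
  have hGconn : IsPreconnected G :=
    isPreconnected_Ioo.image _ (Continuous.continuousOn (AddCircle.continuous_mk' 1))
  have hxG : ((ξ : ℝ) : UnitAddCircle) ∈ G := ⟨ξ, ⟨haξ, hξb⟩, rfl⟩
  have hGsub : G ⊆ (orbitPts α k)ᶜ := by
    rintro z ⟨r, ⟨har, hrb⟩, rfl⟩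
    intro hzorb
    obtain ⟨m, hm1, hm2, heq⟩ := hzorb
    rw [Stmt11Aux.coe_eq_iff] at heq
    obtain ⟨n, hn⟩ := heq
    have hreq : r = (m:ℝ) * α - (-n:ℤ) := by push_cast; linarith
    have hmq : m ≤ q := by
      rw [hcf, hq] at hm2
      exact_mod_cast hm2
    rcases havoid m hm1 hmq (-n) with h | h
    · rw [← hreq] at h; linarith
    · rw [← hreq] at h; linarith
  have hGcomp : G ⊆ connectedComponentIn (orbitPts α k)ᶜ (((ξ : ℝ) : UnitAddCircle)) :=
    hGconn.subset_connectedComponentIn hxG hGsub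
  -- counting
  set N : ℕ := ⌊Q⌋₊ with hNdef
  set P : ℕ := q + q' with hPdef
  have hq'q : q' ≤ q := by
    have h1 : (GenContFract.of α).dens (k-1) ≤ (GenContFract.of α).dens (k-1+1) :=
      GenContFract.of_den_mono
    rw [e1, hq, hq'] at h1
    exact_mod_cast h1
  have hP0 : 0 < P := by omega
  have hP2 : P ≤ 2 * q := by omega
  have hQ6 : 6 * (q:ℝ) ≤ Q := by rw [hcf, hq] at hQ; exact hQ
  have hq1R : (1:ℝ) ≤ (q:ℝ) := by exact_mod_cast hq1
  have hQ0 : (0:ℝ) ≤ Q := by linarith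
  have hN6 : 6 * q ≤ N := Nat.le_floor (by push_cast; linarith)
  have hNQ : (N:ℝ) ≤ Q := Nat.floor_le hQ0
  have hNlt : Q < (N:ℝ) + 1 := Nat.lt_floor_add_one Q
  clear_value N
  set W : ℕ := (N - q) / P with hWdef
  have ha_eq : a = (m₁:ℝ)*α - ((⌊(m₁:ℝ)*α - ξ⌋ + 1 : ℤ):ℝ) := by
    rw [← hm₁]
  have hb_eq : b = (m₂:ℝ)*α - ((⌈(m₂:ℝ)*α - ξ⌉ - 1 : ℤ):ℝ) := by
    rw [← hm₂]
  -- each window contains a visit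
  have hvisit : ∀ w : Fin W, ∃ m : ℕ, (q + w.val * P < m ∧ m ≤ q + w.val * P + P) ∧
      (cfDen α k < (m:ℝ) ∧ (m:ℝ) ≤ Q ∧
        ((m * α : ℝ) : UnitAddCircle) ∈ connectedComponentIn (orbitPts α k)ᶜ (((ξ:ℝ)) : UnitAddCircle)) := by
    intro w
    obtain ⟨s, hs⟩ : ∃ s, s = q + w.val * P := ⟨_, rfl⟩
    obtain ⟨j, n, hj1, hjb, hl, hh⟩ :=
      Stmt11Aux.covering hα k hk (a - ((s:ℕ):ℝ) * α)
    rw [← hs]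
    have hjP : j ≤ P := by
      rw [hq, hq'] at hjb
      have h2 : (j:ℝ) ≤ ((P:ℕ):ℝ) := by rw [hPdef]; push_cast; push_cast at hjb; linarith
      exact_mod_cast h2
    have hqs : q ≤ s := hs ▸ Nat.le_add_right q _
    refine ⟨s + j, ⟨by omega, by omega⟩, ?_, ?_, ?_⟩
    · rw [hcf, hq]
      have : q < s + j := by omega
      exact_mod_cast this
    · have hs1 : w.val * P + P ≤ W * P := by
        have h1 : (w.val + 1) * P ≤ W * P := Nat.mul_le_mul_right P w.2
        rwa [Nat.succ_mul] at h1
      have hs2 : W * P ≤ N - q := Nat.div_mul_le_self _ _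
      have h7 : s + P ≤ q + W * P := by
        rw [hs, add_assoc]
        exact Nat.add_le_add_left hs1 q
      have h8 : q + W * P ≤ q + (N - q) := Nat.add_le_add_left hs2 q
      have hqN : q ≤ N := le_trans (by omega) hN6
      have h9 : q + (N - q) = N := by omega
      have hmN : s + j ≤ N := by
        refine le_trans (le_trans (by omega : s + j ≤ s + P) h7) ?_
        rw [← h9]
        exact h8
      calc ((s + j : ℕ):ℝ) ≤ ((N:ℕ):ℝ) := by exact_mod_cast hmN
        _ ≤ Q := hNQ
    · have hy1 : a ≤ ((s + j : ℕ):ℝ) * α - n := by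
        push_cast at hl ⊢
        linarith
      have hy2 : ((s + j : ℕ):ℝ) * α - n ≤ a + η := by
        push_cast at hh ⊢
        linarith
      have hne : ∀ (m' : ℕ) (n' : ℤ), 1 ≤ m' → m' ≤ q →
          ((s + j : ℕ):ℝ)*α - n ≠ (m':ℝ)*α - n' := by
        intro m' n' hm'1 hm'q hcon
        have hd0 : ((s + j : ℕ):ℤ) - m' ≠ 0 := by
          have : q < s + j := by omega
          omega
        apply Stmt11Aux.irr_ne hα (((s + j : ℕ):ℤ) - m') (n - n') hd0
        push_cast
        push_cast at hcon
        linarith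
      have hya : ((s + j : ℕ):ℝ)*α - n ≠ a := by
        rw [ha_eq]; exact hne m₁ _ hm₁T.1 hm₁T.2
      have hyb : ((s + j : ℕ):ℝ)*α - n ≠ b := by
        rw [hb_eq]; exact hne m₂ _ hm₂T.1 hm₂T.2
      have hymid1 : a < ((s + j : ℕ):ℝ)*α - n := lt_of_le_of_ne hy1 (Ne.symm hya)
      have hymid2 : ((s + j : ℕ):ℝ)*α - n < b := lt_of_le_of_ne (by linarith) hyb
      apply hGcomp
      have hcoe : (((s + j : ℕ) * α : ℝ) : UnitAddCircle) =
          ((((s + j : ℕ):ℝ)*α - n : ℝ) : UnitAddCircle) := by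
        rw [Stmt11Aux.coe_eq_iff]
        exact ⟨n, by push_cast; ring⟩
      rw [hcoe]
      exact ⟨((s + j : ℕ):ℝ)*α - n, ⟨hymid1, hymid2⟩, rfl⟩
  choose f hf1 hf2 using hvisit
  have hkey : ∀ u v : Fin W, u.val < v.val → f u < f v := by
    intro u v huv
    have h1 : (u.val + 1) * P ≤ v.val * P := Nat.mul_le_mul_right P huv
    rw [Nat.succ_mul] at h1
    have h2 := (hf1 u).2
    have h3 := (hf1 v).1
    have h4 : q + u.val*P + P ≤ q + v.val*P := by
      rw [add_assoc]
      exact Nat.add_le_add_left h1 q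
    exact lt_of_le_of_lt (le_trans h2 h4) h3
  have hinj : Function.Injective f := by
    intro w w' heq
    by_contra hnee
    rcases Nat.lt_or_ge w.val w'.val with h | h
    · exact absurd heq (Nat.ne_of_lt (hkey w w' h))
    · rcases Nat.lt_or_ge w'.val w.val with h' | h'
      · exact absurd heq.symm (Nat.ne_of_lt (hkey w' w h'))
      · exact hnee (Fin.ext (le_antisymm h' h))
  have hfin : {m : ℕ | cfDen α k < (m:ℝ) ∧ (m:ℝ) ≤ Q ∧
      ((m * α : ℝ) : UnitAddCircle) ∈ connectedComponentIn (orbitPts α k)ᶜ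
        (((ξ:ℝ)) : UnitAddCircle)}.Finite := by
    apply Set.Finite.subset (Set.finite_Iic N)
    intro m hm
    simp only [Set.mem_Iic, hNdef]
    exact Nat.le_floor hm.2.1
  haveI := hfin.to_subtype
  have hWle : W ≤ {m : ℕ | cfDen α k < (m:ℝ) ∧ (m:ℝ) ≤ Q ∧
      ((m * α : ℝ) : UnitAddCircle) ∈ connectedComponentIn (orbitPts α k)ᶜ
        (((ξ:ℝ)) : UnitAddCircle)}.ncard := by
    rw [← Nat.card_coe_set_eq]
    calc W = Nat.card (Fin W) := by simp
      _ ≤ Nat.card _ := Nat.card_le_card_of_injective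
          (fun w => (⟨f w, hf2 w⟩ : {m : ℕ | cfDen α k < (m:ℝ) ∧ (m:ℝ) ≤ Q ∧
            ((m * α : ℝ) : UnitAddCircle) ∈ connectedComponentIn (orbitPts α k)ᶜ
              (((ξ:ℝ)) : UnitAddCircle)}))
          (fun w w' h => hinj (congrArg Subtype.val h))
  have hWr : (W:ℝ) ≤ ({m : ℕ | cfDen α k < (m:ℝ) ∧ (m:ℝ) ≤ Q ∧
      ((m * α : ℝ) : UnitAddCircle) ∈ connectedComponentIn (orbitPts α k)ᶜ
        (((ξ:ℝ)) : UnitAddCircle)}.ncard : ℝ) := by exact_mod_cast hWle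
  have hgoal_eq : Q / (4 * cfDen α k) = Q / (4 * (q:ℝ)) := by rw [hcf, hq]
  rw [hgoal_eq]
  have hfinal : Q / (4 * (q:ℝ)) ≤ (W:ℝ) := by
    have hP2r : ((P:ℕ):ℝ) ≤ 2 * (q:ℝ) := by exact_mod_cast hP2
    have hPr : (0:ℝ) < ((P:ℕ):ℝ) := by exact_mod_cast hP0
    rcases lt_or_ge Q (6*(q:ℝ) + 2) with hc | hc
    · have hW2 : 2 ≤ W := by
        rw [hWdef]
        apply (Nat.le_div_iff_mul_le hP0).mpr
        omega
      have h2W : (2:ℝ) ≤ (W:ℝ) := by exact_mod_cast hW2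
      rw [div_le_iff₀ (by positivity : (0:ℝ) < 4 * (q:ℝ))]
      have h10 : 2*(4*(q:ℝ)) ≤ (W:ℝ)*(4*(q:ℝ)) :=
        mul_le_mul_of_nonneg_right h2W (by positivity)
      linarith [h10, hc, hq1R]
    · have hmod : (N - q : ℕ) % P < P := Nat.mod_lt _ hP0
      have hdm : P * W + (N - q) % P = N - q := Nat.div_add_mod _ _
      have hlt : (N - q : ℕ) < W * P + P := by
        have h5 := Nat.add_lt_add_left hmod (P * W)
        rw [hdm] at h5
        calc N - q < P * W + P := h5
          _ = W * P + P := by rw [Nat.mul_comm]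
      have hcast1 : ((N - q : ℕ):ℝ) = (N:ℝ) - (q:ℝ) := by
        have hqN : q ≤ N := by omega
        exact Nat.cast_sub hqN
      have hWP : (N:ℝ) - (q:ℝ) < (W:ℝ) * P + P := by
        rw [← hcast1]
        exact_mod_cast hlt
      rw [div_le_iff₀ (by positivity : (0:ℝ) < 4 * (q:ℝ))]
      have hWnn : (0:ℝ) ≤ (W:ℝ) := Nat.cast_nonneg W
      have h11 : (W:ℝ)*((P:ℕ):ℝ) ≤ (W:ℝ)*(2*(q:ℝ)) :=
        mul_le_mul_of_nonneg_left hP2r hWnn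
      linarith [h11, hWP, hNlt, hc, hP2r]
  linarith
end

section
/- Let α be irrational such that q_{n+1}/q_n → ∞ (equivalently a_n → ∞), let 0 < δ < 1/2, and let x ∈ (0,1) satisfy ‖q_ℓ x‖ > δ for all sufficiently large ℓ. Then liminf_{|k|→∞} |k|·‖kα − x‖ ≥ δ²/4. -/
open Filter MeasureTheory

/-- Distance from a real number to the nearest integer. -/
noncomputable def nint (x : ℝ) : ℝ := |x - round x|

lemma nint_nonneg (z : ℝ) : 0 ≤ nint z := abs_nonneg _

lemma nint_le_int (z : ℝ) (m : ℤ) : nint z ≤ |z - m| := by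
  rcases eq_or_ne m (round z) with rfl | hm
  · exact le_of_eq rfl
  · have h1 : |z - round z| ≤ 1 / 2 := abs_sub_round z
    have h2 : (1 : ℝ) ≤ |(m : ℝ) - round z| := by
      have : (1 : ℤ) ≤ |m - round z| := Int.one_le_abs (sub_ne_zero.mpr hm)
      exact_mod_cast this
    have h3 : |(m : ℝ) - round z| ≤ |(m : ℝ) - z| + |z - round z| := abs_sub_le _ _ _
    have h4 : |(m : ℝ) - z| = |z - m| := abs_sub_comm _ _
    show |z - round z| ≤ |z - (m : ℝ)|
    linarith

set_option maxHeartbeats 1000000 in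
theorem stmt13 (α : ℝ) (hα : Irrational α)
    (hq : Tendsto (fun n : ℕ => cfDen α (n + 1) / cfDen α n) atTop atTop)
    (δ : ℝ) (hδ0 : 0 < δ) (hδ : δ < 1 / 2)
    (x : ℝ) (hx : x ∈ Set.Ioo (0 : ℝ) 1)
    (hxδ : ∀ᶠ ℓ in atTop, δ < nint (cfDen α ℓ * x)) :
    δ ^ 2 / 4 ≤ Filter.liminf (fun k : ℤ => |(k : ℝ)| * nint (k * α - x)) Filter.cofinite := by
  -- never terminates
  have hterm : ∀ n, ¬ (GenContFract.of α).TerminatedAt n := by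
    intro n h
    obtain ⟨q, hq'⟩ := (GenContFract.terminates_iff_rat α).mp ⟨n, h⟩
    exact hα ⟨q, hq'.symm⟩
  -- numerators and denominators are integers
  have hints : ∀ n, (∃ p : ℤ, (GenContFract.of α).nums n = (p : ℝ)) ∧
      (∃ b : ℤ, (GenContFract.of α).dens n = (b : ℝ)) := by
    intro n
    induction n using Nat.twoStepInduction with
    | zero =>
      refine ⟨⟨⌊α⌋, ?_⟩, ⟨1, ?_⟩⟩
      · rw [GenContFract.zeroth_num_eq_h, GenContFract.of_h_eq_floor]
      · rw [GenContFract.zeroth_den_eq_one]; norm_num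
    | one =>
      obtain ⟨gp, hgp⟩ := Option.ne_none_iff_exists'.1 (hterm 0)
      have ha : gp.a = 1 := GenContFract.of_partNum_eq_one (GenContFract.partNum_eq_s_a hgp)
      obtain ⟨z, hz⟩ := (GenContFract.of_partNum_eq_one_and_exists_int_partDen_eq hgp).2
      refine ⟨⟨z * ⌊α⌋ + 1, ?_⟩, ⟨z, ?_⟩⟩
      · rw [GenContFract.first_num_eq hgp, ha, GenContFract.of_h_eq_floor, hz]; push_cast; ring
      · rw [GenContFract.first_den_eq hgp, hz]
    | more n ih0 ih1 =>
      obtain ⟨gp, hgp⟩ := Option.ne_none_iff_exists'.1 (hterm (n + 1))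
      have ha : gp.a = 1 := GenContFract.of_partNum_eq_one (GenContFract.partNum_eq_s_a hgp)
      obtain ⟨z, hz⟩ := (GenContFract.of_partNum_eq_one_and_exists_int_partDen_eq hgp).2
      obtain ⟨⟨p0, hp0⟩, ⟨b0, hb0⟩⟩ := ih0
      obtain ⟨⟨p1, hp1⟩, ⟨b1, hb1⟩⟩ := ih1
      refine ⟨⟨z * p1 + p0, ?_⟩, ⟨z * b1 + b0, ?_⟩⟩
      · rw [GenContFract.nums_recurrence hgp hp0 hp1, ha, hz]; push_cast; ring
      · rw [GenContFract.dens_recurrence hgp hb0 hb1, ha, hz]; push_cast; ring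
  choose P hP using fun n => (hints n).1
  choose Q hQ using fun n => (hints n).2
  have hP' : ∀ n, (GenContFract.of α).nums n = ((P n : ℤ) : ℝ) := hP
  have hQ' : ∀ n, cfDen α n = ((Q n : ℤ) : ℝ) := hQ
  -- basic denominator facts
  have hq1 : ∀ n, (1 : ℝ) ≤ cfDen α n := by
    intro n
    have h1 := GenContFract.succ_nth_fib_le_of_nth_den (v := α) (n := n) (Or.inr (hterm _))
    have h2 : 1 ≤ Nat.fib (n + 1) := Nat.fib_pos.mpr n.succ_pos
    calc (1 : ℝ) ≤ (Nat.fib (n + 1) : ℝ) := by exact_mod_cast h2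
      _ ≤ _ := h1
  have hq0 : ∀ n, (0 : ℝ) < cfDen α n := fun n => lt_of_lt_of_le one_pos (hq1 n)
  have hqn : ∀ n : ℕ, (n : ℝ) ≤ cfDen α n := by
    intro n
    have h1 := GenContFract.succ_nth_fib_le_of_nth_den (v := α) (n := n) (Or.inr (hterm _))
    have h2 : n ≤ Nat.fib (n + 1) := by
      have := Nat.le_fib_add_one (n + 1)
      omega
    calc (n : ℝ) ≤ (Nat.fib (n + 1) : ℝ) := by exact_mod_cast h2
      _ ≤ _ := h1
  have hmono : Monotone (cfDen α) :=
    monotone_nat_of_le_succ fun n => GenContFract.of_den_mono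
  -- the approximation quality
  set D : ℕ → ℝ := fun n => |cfDen α n * α - P n| with hD
  have hDle : ∀ n, D n ≤ 1 / cfDen α (n + 1) := by
    intro n
    have h1 : |α - (GenContFract.of α).nums n / (GenContFract.of α).dens n| ≤
        1 / ((GenContFract.of α).dens n * (GenContFract.of α).dens (n + 1)) := by
      rw [← GenContFract.conv_eq_num_div_den]
      exact GenContFract.abs_sub_convs_le (hterm n)
    have h0 := hq0 n
    have h0' := hq0 (n + 1)
    have key : D n = cfDen α n * |α - (GenContFract.of α).nums n / (GenContFract.of α).dens n| := by
      have e1 : (GenContFract.of α).nums n / (GenContFract.of α).dens n = (P n : ℝ) / cfDen α n := by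
        rw [hP n]; rfl
      calc D n = |cfDen α n * (α - (P n : ℝ) / cfDen α n)| := by
            show |cfDen α n * α - (P n : ℝ)| = _
            congr 1
            field_simp
        _ = |cfDen α n| * |α - (P n : ℝ) / cfDen α n| := abs_mul _ _
        _ = cfDen α n * |α - (GenContFract.of α).nums n / (GenContFract.of α).dens n| := by
            rw [abs_of_pos h0, e1]
    rw [key]
    calc cfDen α n * |α - (GenContFract.of α).nums n / (GenContFract.of α).dens n|
        ≤ cfDen α n * (1 / (cfDen α n * cfDen α (n + 1))) := by
          exact mul_le_mul_of_nonneg_left h1 h0.le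
      _ = 1 / cfDen α (n + 1) := by field_simp
  have hD0 : ∀ n, 0 < D n := by
    intro n
    have habs : D n = |cfDen α n * α - (P n : ℝ)| := rfl
    rw [habs, abs_pos]
    intro h
    apply hα
    have h0 := hq0 n
    have hQ0 : ((Q n : ℤ) : ℝ) ≠ 0 := by rw [← hQ' n]; positivity
    refine ⟨(P n : ℚ) / (Q n : ℚ), ?_⟩
    push_cast
    rw [div_eq_iff hQ0]
    have h2 : ((Q n : ℤ) : ℝ) * α - (P n : ℝ) = 0 := by rw [← hQ' n]; exact h
    linear_combination -h2
  -- determinant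
  have hdet : ∀ n, (GenContFract.of α).nums n * (GenContFract.of α).dens (n + 1) -
      (GenContFract.of α).dens n * (GenContFract.of α).nums (n + 1) = (-1 : ℝ) ^ (n + 1) := by
    intro n
    exact SimpContFract.determinant (s := SimpContFract.of α) (hterm n)
  -- thresholds
  obtain ⟨L1', hL1'⟩ := eventually_atTop.mp (hq.eventually_ge_atTop 8)
  obtain ⟨L0, hL0⟩ := eventually_atTop.mp hxδ
  set L1 := max L1' L0 with hL1def
  have hL0L1 : L0 ≤ L1 := le_max_right _ _
  have hrat8 : ∀ ℓ, L1 ≤ ℓ → 8 * cfDen α ℓ ≤ cfDen α (ℓ + 1) := by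
    intro ℓ hℓ
    have h := hL1' ℓ (le_trans (le_max_left _ _) hℓ)
    have h0 := hq0 ℓ
    rw [le_div_iff₀ h0] at h
    linarith
  -- determinant lower bound on D
  have hdet1 : ∀ ℓ : ℕ, (1:ℝ) ≤ cfDen α (ℓ+1) * D ℓ + cfDen α ℓ * D (ℓ+1) := by
    intro ℓ
    have e := hdet ℓ
    have e2 : |(-1 : ℝ)^(ℓ+1)| = 1 := by rw [abs_pow, abs_neg, abs_one, one_pow]
    have e3 : (GenContFract.of α).nums ℓ * (GenContFract.of α).dens (ℓ+1) -
        (GenContFract.of α).dens ℓ * (GenContFract.of α).nums (ℓ+1)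
        = cfDen α ℓ * (cfDen α (ℓ+1) * α - (P (ℓ+1) : ℝ)) -
          cfDen α (ℓ+1) * (cfDen α ℓ * α - (P ℓ : ℝ)) := by
      rw [hP' ℓ, hP' (ℓ+1)]
      show (P ℓ : ℝ) * cfDen α (ℓ+1) - cfDen α ℓ * (P (ℓ+1) : ℝ) = _
      ring
    have h4 : (1:ℝ) ≤ cfDen α ℓ * D (ℓ+1) + cfDen α (ℓ+1) * D ℓ := by
      calc (1:ℝ) = |(GenContFract.of α).nums ℓ * (GenContFract.of α).dens (ℓ+1) -
            (GenContFract.of α).dens ℓ * (GenContFract.of α).nums (ℓ+1)| := by rw [e, e2]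
        _ = |cfDen α ℓ * (cfDen α (ℓ+1) * α - (P (ℓ+1) : ℝ)) -
            cfDen α (ℓ+1) * (cfDen α ℓ * α - (P ℓ : ℝ))| := by rw [e3]
        _ ≤ |cfDen α ℓ * (cfDen α (ℓ+1) * α - (P (ℓ+1) : ℝ))| +
            |cfDen α (ℓ+1) * (cfDen α ℓ * α - (P ℓ : ℝ))| := abs_sub _ _
        _ = cfDen α ℓ * D (ℓ+1) + cfDen α (ℓ+1) * D ℓ := by
            rw [abs_mul, abs_mul, abs_of_pos (hq0 (ℓ+1)), abs_of_pos (hq0 ℓ)]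
    linarith
  have hDge : ∀ ℓ, L1 ≤ ℓ → 1 / (2 * cfDen α (ℓ + 1)) ≤ D ℓ := by
    intro ℓ hℓ
    have h1 := hdet1 ℓ
    have hc : 64 * cfDen α ℓ ≤ cfDen α (ℓ+2) := by
      have ha := hrat8 ℓ hℓ
      have hb := hrat8 (ℓ+1) (hℓ.trans (Nat.le_succ ℓ))
      linarith
    have had1 : cfDen α ℓ * D (ℓ+1) ≤ 1/64 := by
      calc cfDen α ℓ * D (ℓ+1) ≤ cfDen α ℓ * (1 / cfDen α (ℓ+2)) :=
            mul_le_mul_of_nonneg_left (hDle _) (hq0 ℓ).le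
        _ ≤ 1/64 := by
            rw [mul_one_div, div_le_div_iff₀ (hq0 _) (by norm_num)]
            linarith
    rw [div_le_iff₀ (by have := hq0 (ℓ+1); linarith : (0:ℝ) < 2 * cfDen α (ℓ + 1))]
    nlinarith [hq0 (ℓ+1), hD0 ℓ]
  -- the key inequality
  have hkey : ∀ (k : ℤ) (ℓ : ℕ), nint (cfDen α ℓ * x) ≤
      |(k:ℝ)| * D ℓ + cfDen α ℓ * nint ((k:ℝ) * α - x) := by
    intro k ℓ
    refine (nint_le_int (cfDen α ℓ * x) (k * P ℓ - Q ℓ * round ((k:ℝ)*α - x))).trans ?_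
    have e : cfDen α ℓ * x - ((k * P ℓ - Q ℓ * round ((k:ℝ)*α - x) : ℤ) : ℝ)
        = (k:ℝ) * (cfDen α ℓ * α - (P ℓ : ℝ)) -
          cfDen α ℓ * (((k:ℝ)*α - x) - round ((k:ℝ)*α - x)) := by
      push_cast
      rw [hQ' ℓ]
      ring
    rw [e]
    calc |(k:ℝ) * (cfDen α ℓ * α - (P ℓ : ℝ)) -
          cfDen α ℓ * (((k:ℝ)*α - x) - round ((k:ℝ)*α - x))|
        ≤ |(k:ℝ) * (cfDen α ℓ * α - (P ℓ : ℝ))| +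
          |cfDen α ℓ * (((k:ℝ)*α - x) - round ((k:ℝ)*α - x))| := abs_sub _ _
      _ = |(k:ℝ)| * D ℓ + cfDen α ℓ * nint ((k:ℝ) * α - x) := by
          rw [abs_mul, abs_mul, abs_of_pos (hq0 ℓ)]
          rfl
  -- main bound for large k
  have hmain : ∀ k : ℤ, ∀ ℓ : ℕ, L0 ≤ ℓ → 1 ≤ |(k:ℝ)| →
      cfDen α ℓ ≤ 2/δ * |(k:ℝ)| → 2/δ * |(k:ℝ)| < cfDen α (ℓ+1) →
      δ^2/4 ≤ |(k:ℝ)| * nint ((k:ℝ) * α - x) := by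
    intro k ℓ hℓ hk hql hqu
    have hk0 : (0:ℝ) < |(k:ℝ)| := lt_of_lt_of_le one_pos hk
    have h1 : δ < nint (cfDen α ℓ * x) := hL0 ℓ hℓ
    have h2 := hkey k ℓ
    have h3 : |(k:ℝ)| * D ℓ ≤ δ / 2 := by
      have hd := hDle ℓ
      have : |(k:ℝ)| * D ℓ ≤ |(k:ℝ)| * (1 / cfDen α (ℓ+1)) :=
        mul_le_mul_of_nonneg_left hd hk0.le
      refine this.trans ?_
      rw [mul_one_div, div_le_iff₀ (hq0 (ℓ+1))]
      have e4 : |(k:ℝ)| = δ/2 * (2/δ * |(k:ℝ)|) := by field_simp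
      rw [e4]
      exact mul_le_mul_of_nonneg_left hqu.le (by linarith)
    have h4 : δ/2 < cfDen α ℓ * nint ((k:ℝ) * α - x) := by linarith
    have h5 : δ/2 ≤ (2/δ * |(k:ℝ)|) * nint ((k:ℝ) * α - x) := by
      refine h4.le.trans ?_
      exact mul_le_mul_of_nonneg_right hql (nint_nonneg _)
    calc δ^2/4 = δ/2 * (δ/2) := by ring
      _ ≤ δ/2 * ((2/δ * |(k:ℝ)|) * nint ((k:ℝ) * α - x)) := by
          exact mul_le_mul_of_nonneg_left h5 (by linarith)
      _ = |(k:ℝ)| * nint ((k:ℝ) * α - x) := by field_simp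
  -- positivity of nint (k α - x)
  have hpos : ∀ k : ℤ, 0 < nint ((k:ℝ) * α - x) := by
    intro k
    rcases (nint_nonneg ((k:ℝ)*α - x)).lt_or_eq with h | h
    · exact h
    · exfalso
      have h2 : |(k:ℝ)*α - x - (round ((k:ℝ)*α - x) : ℝ)| = 0 := h.symm
      have hm := abs_eq_zero.mp h2
      set ℓ := max L0 (⌈|(k:ℝ)|/δ⌉₊) with hℓdef
      have hℓ0 : L0 ≤ ℓ := le_max_left _ _
      have h1 : δ < nint (cfDen α ℓ * x) := hL0 ℓ hℓ0
      have h2' : nint (cfDen α ℓ * x) ≤ |(k:ℝ)| * D ℓ := by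
        refine (nint_le_int _ (k * P ℓ - Q ℓ * round ((k:ℝ)*α - x))).trans ?_
        have e : cfDen α ℓ * x - ((k * P ℓ - Q ℓ * round ((k:ℝ)*α - x) : ℤ) : ℝ)
            = (k:ℝ) * (cfDen α ℓ * α - (P ℓ : ℝ))
              - cfDen α ℓ * ((k:ℝ)*α - x - (round ((k:ℝ)*α - x) : ℝ)) := by
          push_cast
          rw [hQ' ℓ]
          ring
        rw [e, hm, mul_zero, sub_zero, abs_mul]
      have h4 : (ℓ:ℝ) + 1 ≤ cfDen α (ℓ+1) := by
        have := hqn (ℓ+1); push_cast at this; linarith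
      have h5 : |(k:ℝ)|/δ < cfDen α (ℓ+1) := by
        have u1 : |(k:ℝ)|/δ ≤ (⌈|(k:ℝ)|/δ⌉₊ : ℝ) := Nat.le_ceil _
        have u2 : (⌈|(k:ℝ)|/δ⌉₊ : ℝ) ≤ (ℓ:ℝ) := Nat.cast_le.mpr (le_max_right _ _)
        linarith
      have h6 : |(k:ℝ)| * D ℓ < δ := by
        have t1 : |(k:ℝ)| * D ℓ ≤ |(k:ℝ)| * (1/cfDen α (ℓ+1)) :=
          mul_le_mul_of_nonneg_left (hDle ℓ) (abs_nonneg _)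
        rw [div_lt_iff₀ hδ0] at h5
        have t2 : |(k:ℝ)| * (1/cfDen α (ℓ+1)) < δ := by
          rw [mul_one_div, div_lt_iff₀ (hq0 _)]
          linarith
        linarith
      linarith
  -- bound for the frequent small values
  set M : ℝ := max (2 * cfDen α L1) (4/3) with hMdef
  have hM43 : (4:ℝ)/3 ≤ M := le_max_right _ _
  have hDone : ∀ n, D n ≤ 1 := by
    intro n
    refine (hDle n).trans ?_
    rw [div_le_one (hq0 _)]
    exact hq1 _
  have hxabs : |x| ≤ 1 := by
    rw [abs_of_pos hx.1]; exact hx.2.le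
  have hcon : ∀ n : ℕ, ∃ k : ℤ, nint ((k:ℝ)*α - x) ≤ D (L1+n)/2 ∧ |(k:ℝ)| * D (L1+n) ≤ M := by
    intro n
    induction n with
    | zero =>
      set β := cfDen α L1 * α - (P L1 : ℝ) with hβdef
      have hβD : |β| = D L1 := rfl
      have hβ0 : β ≠ 0 := by
        have := hD0 L1; rw [← hβD] at this; exact abs_pos.mp this
      refine ⟨round (x/β) * Q L1, ?_, ?_⟩
      · refine (nint_le_int _ (round (x/β) * P L1)).trans ?_
        have eβ : ((Q L1 : ℤ) : ℝ) * α - ((P L1 : ℤ) : ℝ) = β := by rw [hβdef, hQ' L1]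
        have e2 : β * ((round (x/β) : ℝ) - x/β) = (round (x/β) : ℝ) * β - x := by
          field_simp
        have e : ((round (x/β) * Q L1 : ℤ) : ℝ) * α - x - ((round (x/β) * P L1 : ℤ) : ℝ)
            = β * ((round (x/β) : ℝ) - x/β) := by
          rw [e2, ← eβ]
          push_cast
          ring
        rw [e, abs_mul, hβD, abs_sub_comm]
        have := abs_sub_round (x/β)
        calc D L1 * |x/β - (round (x/β) : ℝ)| ≤ D L1 * (1/2) :=
              mul_le_mul_of_nonneg_left this (hD0 _).le
          _ = D L1 / 2 := by ring
      · have t0 : |((round (x/β) * Q L1 : ℤ) : ℝ)| = |(round (x/β) : ℝ)| * cfDen α L1 := by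
          push_cast
          rw [abs_mul]
          congr 1
          rw [← hQ' L1]
          exact abs_of_pos (hq0 L1)
        have t1 : |(round (x/β) : ℝ)| ≤ |x/β| + 1/2 := by
          have u1 := abs_sub_round (x/β)
          have u2 : |(round (x/β) : ℝ)| - |x/β| ≤ |(round (x/β) : ℝ) - x/β| :=
            abs_sub_abs_le_abs_sub _ _
          have u3 : |(round (x/β) : ℝ) - x/β| = |x/β - (round (x/β) : ℝ)| := abs_sub_comm _ _
          linarith
        have t2 : |x/β| = |x| / D L1 := by rw [abs_div, hβD]
        have t3 : |(round (x/β) : ℝ)| * D L1 ≤ |x| + D L1/2 := by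
          have := mul_le_mul_of_nonneg_right t1 (hD0 L1).le
          rw [add_mul, t2, div_mul_cancel₀ _ (hD0 L1).ne'] at this
          linarith
        have hM0 : 2 * cfDen α L1 ≤ M := le_max_left _ _
        rw [t0]
        have goal1 : |(round (x/β) : ℝ)| * cfDen α L1 * D (L1+0) =
            cfDen α L1 * (|(round (x/β) : ℝ)| * D L1) := by
          show |(round (x/β) : ℝ)| * cfDen α L1 * D L1 = _
          ring
        rw [goal1]
        calc cfDen α L1 * (|(round (x/β) : ℝ)| * D L1) ≤ cfDen α L1 * (|x| + D L1/2) :=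
              mul_le_mul_of_nonneg_left t3 (hq0 L1).le
          _ ≤ cfDen α L1 * 2 := by
              have := hDone L1
              refine mul_le_mul_of_nonneg_left ?_ (hq0 L1).le
              linarith
          _ ≤ M := by linarith
    | succ n ih =>
      obtain ⟨k, hk1, hk2⟩ := ih
      set ℓ := L1 + n with hℓdef
      have hL1ℓ : L1 ≤ ℓ := Nat.le_add_right _ _
      set r := (k:ℝ)*α - x - (round ((k:ℝ)*α - x) : ℝ) with hrdef
      have hr : |r| ≤ D ℓ / 2 := hk1
      set β := cfDen α (ℓ+1) * α - (P (ℓ+1) : ℝ) with hβdef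
      have hβD : |β| = D (ℓ+1) := rfl
      have hβ0 : β ≠ 0 := by
        have := hD0 (ℓ+1); rw [← hβD] at this; exact abs_pos.mp this
      have hstep : L1 + (n+1) = ℓ + 1 := rfl
      rw [hstep]
      refine ⟨k + (-round (r/β)) * Q (ℓ+1), ?_, ?_⟩
      · refine (nint_le_int _ (round ((k:ℝ)*α - x) + (-round (r/β)) * P (ℓ+1))).trans ?_
        have eβ : ((Q (ℓ+1) : ℤ) : ℝ) * α - ((P (ℓ+1) : ℤ) : ℝ) = β := by
          rw [hβdef, hQ' (ℓ+1)]
        have e2 : β * (r/β - (round (r/β) : ℝ)) = r - (round (r/β) : ℝ) * β := by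
          field_simp
        have e : ((k + (-round (r/β)) * Q (ℓ+1) : ℤ) : ℝ) * α - x
            - ((round ((k:ℝ)*α - x) + (-round (r/β)) * P (ℓ+1) : ℤ) : ℝ)
            = β * (r/β - (round (r/β) : ℝ)) := by
          rw [e2, ← eβ, hrdef]
          push_cast
          ring
        rw [e, abs_mul, hβD]
        have := abs_sub_round (r/β)
        calc D (ℓ+1) * |r/β - (round (r/β) : ℝ)| ≤ D (ℓ+1) * (1/2) :=
              mul_le_mul_of_nonneg_left this (hD0 _).le
          _ = D (ℓ+1) / 2 := by ring
      · -- size bound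
        have t0 : |((k + (-round (r/β)) * Q (ℓ+1) : ℤ) : ℝ)| ≤
            |(k:ℝ)| + |(round (r/β) : ℝ)| * cfDen α (ℓ+1) := by
          push_cast
          calc |(k:ℝ) + -(round (r/β) : ℝ) * ((Q (ℓ+1) : ℤ) : ℝ)|
              ≤ |(k:ℝ)| + |(-(round (r/β) : ℝ)) * ((Q (ℓ+1) : ℤ) : ℝ)| := abs_add_le _ _
            _ = |(k:ℝ)| + |(round (r/β) : ℝ)| * cfDen α (ℓ+1) := by
                rw [abs_mul, abs_neg]
                congr 2
                rw [← hQ' (ℓ+1)]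
                exact abs_of_pos (hq0 (ℓ+1))
        have tround : |(round (r/β) : ℝ)| ≤ |r|/D (ℓ+1) + 1/2 := by
          have u1 : |r/β| = |r| / D (ℓ+1) := by rw [abs_div, hβD]
          have u2 := abs_sub_round (r/β)
          have u3 : |(round (r/β) : ℝ)| - |r/β| ≤ |(round (r/β) : ℝ) - r/β| :=
            abs_sub_abs_le_abs_sub _ _
          have u4 : |(round (r/β) : ℝ) - r/β| = |r/β - (round (r/β) : ℝ)| := abs_sub_comm _ _
          rw [u1] at u3
          linarith
        have t3 : |(round (r/β) : ℝ)| * D (ℓ+1) ≤ D ℓ/2 + D (ℓ+1)/2 := by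
          have u1 := mul_le_mul_of_nonneg_right tround (hD0 (ℓ+1)).le
          rw [add_mul, div_mul_cancel₀ _ (hD0 (ℓ+1)).ne'] at u1
          have u2 : |r| ≤ D ℓ/2 := hr
          linarith
        have hd4 : D (ℓ+1) ≤ D ℓ / 4 := by
          have v1 : D (ℓ+1) ≤ 1/cfDen α (ℓ+2) := hDle _
          have v2 : 8 * cfDen α (ℓ+1) ≤ cfDen α (ℓ+2) := hrat8 (ℓ+1) (hL1ℓ.trans (Nat.le_succ _))
          have v3 : 1/(2*cfDen α (ℓ+1)) ≤ D ℓ := hDge ℓ hL1ℓ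
          have v4 : 1/cfDen α (ℓ+2) ≤ 1/(8*cfDen α (ℓ+1)) := by
            apply one_div_le_one_div_of_le
            · have := hq0 (ℓ+1); linarith
            · exact v2
          have v5 : (1:ℝ)/(8*cfDen α (ℓ+1)) = (1/(2*cfDen α (ℓ+1)))/4 := by
            rw [div_div]
            ring_nf
          linarith
        have hq'D : cfDen α (ℓ+1) * D ℓ ≤ 1 := by
          have := mul_le_mul_of_nonneg_left (hDle ℓ) (hq0 (ℓ+1)).le
          rw [mul_one_div, div_self (hq0 (ℓ+1)).ne'] at this
          exact this
        have hq'D' : cfDen α (ℓ+1) * D (ℓ+1) ≤ 1 := by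
          have w1 : D (ℓ+1) ≤ 1/cfDen α (ℓ+2) := hDle _
          have w2 : cfDen α (ℓ+1) ≤ cfDen α (ℓ+2) := hmono (Nat.le_succ _)
          have := mul_le_mul_of_nonneg_left w1 (hq0 (ℓ+1)).le
          refine this.trans ?_
          rw [mul_one_div, div_le_one (hq0 (ℓ+2))]
          exact w2
        have tfin := mul_le_mul_of_nonneg_right t0 (hD0 (ℓ+1)).le
        have tk := mul_le_mul_of_nonneg_left hd4 (abs_nonneg (k:ℝ))
        have tq := mul_le_mul_of_nonneg_left t3 (hq0 (ℓ+1)).le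
        nlinarith [hk2, hq'D, hq'D', hM43, abs_nonneg ((k + (-round (r/β)) * Q (ℓ+1) : ℤ) : ℝ)]
  choose ks hks1 hks2 using hcon
  have hmem : ∀ n : ℕ, |((ks n : ℤ) : ℝ)| * nint ((ks n : ℤ) * α - x) ≤ M/2 := by
    intro n
    have t1 := mul_le_mul_of_nonneg_left (hks1 n) (abs_nonneg ((ks n : ℤ) : ℝ))
    have t2 : |((ks n : ℤ) : ℝ)| * (D (L1+n)/2) = (|((ks n : ℤ) : ℝ)| * D (L1+n))/2 := by ring
    rw [t2] at t1
    have := hks2 n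
    calc |((ks n : ℤ) : ℝ)| * nint ((ks n : ℤ) * α - x) ≤ (|((ks n : ℤ) : ℝ)| * D (L1+n))/2 := t1
      _ ≤ M/2 := by linarith
  have hSinf : {k : ℤ | |(k:ℝ)| * nint ((k:ℝ) * α - x) ≤ M/2}.Infinite := by
    by_contra hfin
    rw [Set.not_infinite] at hfin
    haveI := hfin.to_subtype
    obtain ⟨b, hb⟩ := Finite.exists_infinite_fiber
      (fun n : ℕ => (⟨ks n, hmem n⟩ : {k : ℤ | |(k:ℝ)| * nint ((k:ℝ) * α - x) ≤ M/2}))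
    have hT : ((fun n : ℕ => (⟨ks n, hmem n⟩ :
        {k : ℤ | |(k:ℝ)| * nint ((k:ℝ) * α - x) ≤ M/2})) ⁻¹' {b}).Infinite :=
      Set.infinite_coe_iff.mp hb
    have hc : 0 < nint (((b : ℤ) : ℝ) * α - x) := hpos b
    obtain ⟨n, hnT, hn⟩ := hT.exists_gt ⌈1/nint (((b : ℤ) : ℝ) * α - x)⌉₊
    have hkb : ks n = (b : ℤ) := congrArg Subtype.val (hnT : _ = b)
    have h1 : nint (((b : ℤ) : ℝ) * α - x) ≤ D (L1+n)/2 := by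
      have := hks1 n
      rw [hkb] at this
      exact this
    have h2 : D (L1+n) ≤ 1/cfDen α (L1+n+1) := hDle _
    have h3 : (n:ℝ) + 1 ≤ cfDen α (L1+n+1) := by
      have := hqn (L1+n+1)
      have hcast : ((n:ℝ)) + 1 ≤ ((L1+n+1 : ℕ) : ℝ) := by push_cast; linarith
      linarith
    have h4 : 1/nint (((b : ℤ) : ℝ) * α - x) < (n:ℝ) + 1 := by
      have := Nat.le_ceil (1/nint (((b : ℤ) : ℝ) * α - x))
      have hcast : ((⌈1/nint (((b : ℤ) : ℝ) * α - x)⌉₊ : ℕ) : ℝ) < (n:ℝ) := by exact_mod_cast hn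
      linarith
    have h5 : 1/cfDen α (L1+n+1) < nint (((b : ℤ) : ℝ) * α - x) := by
      rw [div_lt_iff₀ (hq0 _)]
      rw [div_lt_iff₀ hc] at h4
      nlinarith [hq0 (L1+n+1)]
    linarith
  have hfreq : ∃ᶠ k : ℤ in cofinite, |(k:ℝ)| * nint ((k:ℝ) * α - x) ≤ M/2 :=
    Filter.frequently_cofinite_iff_infinite.mpr hSinf
  have hcob : Filter.IsCoboundedUnder (· ≥ ·) Filter.cofinite
      (fun k : ℤ => |(k:ℝ)| * nint ((k:ℝ) * α - x)) :=
    Filter.IsCoboundedUnder.of_frequently_le hfreq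
  -- eventual lower bound
  set R : ℕ := max 1 ⌈cfDen α L0 * δ / 2⌉₊ with hRdef
  have hev : ∀ᶠ k : ℤ in cofinite, δ^2/4 ≤ |(k:ℝ)| * nint ((k:ℝ) * α - x) := by
    rw [Filter.eventually_cofinite]
    apply Set.Finite.subset (Set.finite_Icc (-(R:ℤ)) (R:ℤ))
    intro k hk
    simp only [Set.mem_setOf_eq] at hk
    rw [Set.mem_Icc, ← abs_le]
    by_contra hk2
    apply hk
    push_neg at hk2
    have hkR : (R:ℝ) < |(k:ℝ)| := by
      have : ((R:ℤ) : ℝ) < ((|k| : ℤ) : ℝ) := by exact_mod_cast hk2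
      rw [Int.cast_abs] at this
      exact_mod_cast this
    have hk1 : (1:ℝ) ≤ |(k:ℝ)| := by
      have : (1:ℝ) ≤ (R:ℝ) := by exact_mod_cast Nat.one_le_cast.mpr (le_max_left 1 _)
      linarith
    have hN2 : (2:ℝ) ≤ 2/δ * |(k:ℝ)| := by
      have u1 : (2:ℝ) ≤ 2/δ := by
        rw [le_div_iff₀ hδ0]; linarith
      nlinarith
    have hex : ∃ n, 2/δ * |(k:ℝ)| < cfDen α n := by
      refine ⟨⌈2/δ * |(k:ℝ)|⌉₊ + 1, ?_⟩
      have u1 := Nat.le_ceil (2/δ * |(k:ℝ)|)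
      have u2 : ((⌈2/δ * |(k:ℝ)|⌉₊ : ℕ) : ℝ) + 1 ≤ cfDen α (⌈2/δ * |(k:ℝ)|⌉₊ + 1) := by
        have := hqn (⌈2/δ * |(k:ℝ)|⌉₊ + 1)
        push_cast at this ⊢
        linarith
      linarith
    have hfs : 2/δ * |(k:ℝ)| < cfDen α (Nat.find hex) := Nat.find_spec hex
    have hL0' : Nat.find hex ≠ 0 := by
      intro h
      rw [h] at hfs
      have : cfDen α 0 = 1 := GenContFract.zeroth_den_eq_one
      rw [this] at hfs
      linarith
    obtain ⟨ℓ, hℓeq⟩ := Nat.exists_eq_succ_of_ne_zero hL0'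
    have hql : cfDen α ℓ ≤ 2/δ * |(k:ℝ)| := by
      have := Nat.find_min hex (by omega : ℓ < Nat.find hex)
      exact not_lt.mp this
    have hqu : 2/δ * |(k:ℝ)| < cfDen α (ℓ+1) := by rw [hℓeq] at hfs; exact hfs
    have hNL0 : cfDen α L0 ≤ 2/δ * |(k:ℝ)| := by
      have h1 : cfDen α L0 * δ / 2 ≤ (R:ℝ) := by
        have u1 := Nat.le_ceil (cfDen α L0 * δ / 2)
        have u2 : ((⌈cfDen α L0 * δ / 2⌉₊ : ℕ) : ℝ) ≤ (R:ℝ) := by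
          exact_mod_cast Nat.cast_le.mpr (le_max_right 1 _)
        linarith
      have h2 : cfDen α L0 * δ / 2 ≤ |(k:ℝ)| := by linarith
      calc cfDen α L0 = 2/δ * (cfDen α L0 * δ / 2) := by field_simp
        _ ≤ 2/δ * |(k:ℝ)| := mul_le_mul_of_nonneg_left h2 (by positivity)
    have hℓL0 : L0 ≤ ℓ := by
      by_contra hcon2
      push_neg at hcon2
      have := hmono (show ℓ+1 ≤ L0 from hcon2)
      linarith
    exact hmain k ℓ hℓL0 hk1 hql hqu
  exact Filter.le_liminf_of_le hcob hev
end

section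
/- For any sequence (y_k) of best approximation vectors associated to an n×m real matrix A (with rk_ℤ(Aℤ^m + ℤ^n) = m+n), the norms Y_k = |y_k| satisfy Y_{i+3^{m+n}} ≥ 2 Y_{i+1} for all i ≥ 1. -/
open Filter

/-- Sup norm of an integer vector, as a real number. -/
noncomputable def supNormZ {k : ℕ} (y : Fin k → ℤ) : ℝ := ⨆ i, |(y i : ℝ)|

/-- `M(y) = ‖ᵗA y‖`: sup-norm distance of `ᵗA y` to `ℤ^m`. -/
noncomputable def Mlin {n m : ℕ} (A : Matrix (Fin n) (Fin m) ℝ) (y : Fin n → ℤ) : ℝ :=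
  ⨆ j, nint (∑ i, A i j * (y i : ℝ))

lemma nint_le (x : ℝ) (q : ℤ) : nint x ≤ |x - q| := round_le x q

lemma le_supNormZ {k : ℕ} (z : Fin k → ℤ) (i : Fin k) : |(z i : ℝ)| ≤ supNormZ z :=
  le_ciSup (f := fun i => |(z i : ℝ)|) (Set.Finite.bddAbove (Set.finite_range _)) i

lemma supNormZ_le {k : ℕ} [Nonempty (Fin k)] (z : Fin k → ℤ) {C : ℝ}
    (h : ∀ i, |(z i : ℝ)| ≤ C) : supNormZ z ≤ C := ciSup_le h

lemma nint_le_Mlin {n m : ℕ} (A : Matrix (Fin n) (Fin m) ℝ) (z : Fin n → ℤ) (j : Fin m) :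
    nint (∑ i, A i j * (z i : ℝ)) ≤ Mlin A z :=
  le_ciSup (f := fun j => nint (∑ i, A i j * (z i : ℝ)))
    (Set.Finite.bddAbove (Set.finite_range _)) j

lemma Mlin_le {n m : ℕ} [Nonempty (Fin m)] (A : Matrix (Fin n) (Fin m) ℝ) (z : Fin n → ℤ)
    {C : ℝ} (h : ∀ j, nint (∑ i, A i j * (z i : ℝ)) ≤ C) : Mlin A z ≤ C := ciSup_le h

lemma Mlin_nonneg {n m : ℕ} [Nonempty (Fin m)] (A : Matrix (Fin n) (Fin m) ℝ)
    (z : Fin n → ℤ) : 0 ≤ Mlin A z :=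
  le_trans (abs_nonneg _) (nint_le_Mlin A z (Classical.arbitrary _))

theorem stmt18 (n m : ℕ) (hn : 1 ≤ n) (hm : 1 ≤ m)
    (A : Matrix (Fin n) (Fin m) ℝ)
    -- `rk_ℤ(A ℤ^m + ℤ^n) = m + n`
    (hrank : Function.Injective (fun qp : (Fin m → ℤ) × (Fin n → ℤ) =>
      A.mulVec (fun j => (qp.1 j : ℝ)) + fun i => (qp.2 i : ℝ)))
    -- `(y k)_{k ≥ 1}` is a sequence of best approximation vectors for `ᵗA`, with `Y_1 = 1`
    (y : ℕ → (Fin n → ℤ)) (hy0 : ∀ k, y k ≠ 0)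
    (hY1 : supNormZ (y 1) = 1)
    (hYmono : StrictMonoOn (fun k => supNormZ (y k)) {k | 1 ≤ k})
    (hManti : StrictAntiOn (fun k => Mlin A (y k)) {k | 1 ≤ k})
    (hbest : ∀ k, 1 ≤ k → ∀ z : Fin n → ℤ, z ≠ 0 → supNormZ z < supNormZ (y (k + 1)) →
      Mlin A (y k) ≤ Mlin A z) :
    ∀ i : ℕ, 1 ≤ i → 2 * supNormZ (y (i + 1)) ≤ supNormZ (y (i + 3 ^ (m + n))) := by
  haveI : Nonempty (Fin n) := ⟨⟨0, hn⟩⟩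
  haveI : Nonempty (Fin m) := ⟨⟨0, hm⟩⟩
  intro i hi
  by_contra hcon
  push_neg at hcon
  set N := 3 ^ (m + n) with hNdef
  have hmem : ∀ k : ℕ, 1 ≤ k → k ∈ {k : ℕ | 1 ≤ k} := fun k hk => hk
  have hY1le : ∀ k, 1 ≤ k → (1 : ℝ) ≤ supNormZ (y k) := by
    intro k hk
    have := hYmono.monotoneOn (hmem 1 le_rfl) (hmem k hk) hk
    simpa [hY1] using this
  have hYlt : ∀ k l, 1 ≤ k → k < l → supNormZ (y k) < supNormZ (y l) := by
    intro k l hk hkl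
    exact hYmono (hmem k hk) (hmem l (le_trans hk hkl.le)) hkl
  have hYle : ∀ k l, 1 ≤ k → k ≤ l → supNormZ (y k) ≤ supNormZ (y l) := by
    intro k l hk hkl
    exact hYmono.monotoneOn (hmem k hk) (hmem l (le_trans hk hkl)) hkl
  have hMle : ∀ k l, 1 ≤ k → k ≤ l → Mlin A (y l) ≤ Mlin A (y k) := by
    intro k l hk hkl
    exact hManti.antitoneOn (hmem k hk) (hmem l (le_trans hk hkl)) hkl
  have hMpos : ∀ k, 1 ≤ k → 0 < Mlin A (y k) := by
    intro k hk
    have h1 : Mlin A (y (k + 1)) < Mlin A (y k) :=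
      hManti (hmem k hk) (hmem (k + 1) (le_trans hk (Nat.le_succ k))) (Nat.lt_succ_self k)
    exact lt_of_le_of_lt (Mlin_nonneg A (y (k + 1))) h1
  -- key contradiction lemma
  have key : ∀ k, 1 ≤ k → ∀ wy : Fin n → ℤ, ∀ wp : Fin m → ℤ, wy ≠ 0 →
      (∀ j, |(∑ i', A i' j * (wy i' : ℝ)) - (wp j : ℝ)| ≤ 2 / 3 * Mlin A (y k)) →
      supNormZ wy < supNormZ (y (k + 1)) → False := by
    intro k hk wy wp hwy hMb hsup
    have h1 : Mlin A wy ≤ 2 / 3 * Mlin A (y k) :=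
      Mlin_le A wy fun j => le_trans (nint_le _ (wp j)) (hMb j)
    have h2 := hbest k hk wy hwy hsup
    have h3 := hMpos k hk
    linarith
  -- nearest integer vectors
    /- `p k j` is the nearest integer to the `j`-th coordinate of `ᵗA y_k`. -/
  set p : ℕ → Fin m → ℤ := fun k j => round (∑ i', A i' j * (y k i' : ℝ)) with hp
  have hd_le : ∀ k j, |(∑ i', A i' j * (y k i' : ℝ)) - (p k j : ℝ)| ≤ Mlin A (y k) := by
    intro k j
    simpa [nint, hp] using nint_le_Mlin A (y k) j
  -- residue map mod 3
  set f : ℕ → (Fin n → ZMod 3) × (Fin m → ZMod 3) :=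
    fun k => (fun i' => ((y k i' : ℤ) : ZMod 3), fun j => ((p k j : ℤ) : ZMod 3)) with hf
  -- the residue is never 0 on relevant indices
  have hmapsto : ∀ k ∈ Finset.Ioc i (i + N), f k ∈
      Finset.univ.erase (0 : (Fin n → ZMod 3) × (Fin m → ZMod 3)) := by
    intro k hk
    rw [Finset.mem_Ioc] at hk
    have hk1 : 1 ≤ k := le_trans hi hk.1.le
    refine Finset.mem_erase.mpr ⟨?_, Finset.mem_univ _⟩
    intro h0
    have hy3 : ∀ i', (3 : ℤ) ∣ y k i' := by
      intro i'
      have h1 : ((y k i' : ℤ) : ZMod 3) = 0 := congrFun (congrArg Prod.fst h0) i'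
      exact (ZMod.intCast_zmod_eq_zero_iff_dvd _ 3).mp h1
    have hp3 : ∀ j, (3 : ℤ) ∣ p k j := by
      intro j
      have h1 : ((p k j : ℤ) : ZMod 3) = 0 := congrFun (congrArg Prod.snd h0) j
      exact (ZMod.intCast_zmod_eq_zero_iff_dvd _ 3).mp h1
    set wy : Fin n → ℤ := fun i' => y k i' / 3 with hwy
    set wp : Fin m → ℤ := fun j => p k j / 3 with hwp
    have hwy3 : ∀ i', (wy i' : ℝ) = (y k i' : ℝ) / 3 := by
      intro i'
      have h1 : (wy i' : ℝ) * 3 = (y k i' : ℝ) := by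
        exact_mod_cast congrArg (Int.cast : ℤ → ℝ) (Int.ediv_mul_cancel (hy3 i'))
      linarith
    have hwp3 : ∀ j, (wp j : ℝ) = (p k j : ℝ) / 3 := by
      intro j
      have h1 : (wp j : ℝ) * 3 = (p k j : ℝ) := by
        exact_mod_cast congrArg (Int.cast : ℤ → ℝ) (Int.ediv_mul_cancel (hp3 j))
      linarith
    have hwyne : wy ≠ 0 := by
      intro h
      apply hy0 k
      funext i'
      have h1 : wy i' = 0 := congrFun h i'
      have h2 : wy i' * 3 = y k i' := Int.ediv_mul_cancel (hy3 i')
      rw [h1] at h2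
      simpa using h2.symm
    have hMb : ∀ j, |(∑ i', A i' j * (wy i' : ℝ)) - (wp j : ℝ)| ≤ 2 / 3 * Mlin A (y k) := by
      intro j
      have s1 : ∑ i', A i' j * (wy i' : ℝ) = (∑ i', A i' j * (y k i' : ℝ)) / 3 := by
        rw [Finset.sum_div]
        exact Finset.sum_congr rfl fun i' _ => by rw [hwy3]; ring
      have e1 : (∑ i', A i' j * (wy i' : ℝ)) - (wp j : ℝ)
          = ((∑ i', A i' j * (y k i' : ℝ)) - (p k j : ℝ)) / 3 := by
        rw [s1, hwp3]; ring
      rw [e1, abs_div]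
      have h1 := hd_le k j
      have h2 := (hMpos k hk1).le
      have h3 : |(3 : ℝ)| = 3 := by norm_num
      rw [h3]
      linarith
    have hsup : supNormZ wy < supNormZ (y (k + 1)) := by
      have h1 : supNormZ wy ≤ supNormZ (y k) / 3 := by
        apply supNormZ_le
        intro i'
        rw [hwy3, abs_div]
        have h2 := le_supNormZ (y k) i'
        have h3 : |(3 : ℝ)| = 3 := by norm_num
        rw [h3]
        linarith
      have h2 := hY1le k hk1
      have h3 := hYlt k (k + 1) hk1 (Nat.lt_succ_self k)
      linarith
    exact key k hk1 wy wp hwyne hMb hsup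
  -- collision yields a contradiction
  have main : ∀ k l : ℕ, k ∈ Finset.Ioc i (i + N) → l ∈ Finset.Ioc i (i + N) →
      k < l → f k = f l → False := by
    intro k l hk hl hkl hfkl
    rw [Finset.mem_Ioc] at hk hl
    have hk1 : 1 ≤ k := le_trans hi hk.1.le
    have hl1 : 1 ≤ l := le_trans hk1 hkl.le
    have hdy : ∀ i', (3 : ℤ) ∣ (y l i' - y k i') := by
      intro i'
      have h1 : ((y k i' : ℤ) : ZMod 3) = ((y l i' : ℤ) : ZMod 3) :=
        congrFun (congrArg Prod.fst hfkl) i'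
      have h2 : ((y l i' - y k i' : ℤ) : ZMod 3) = 0 := by
        rw [Int.cast_sub, ← h1, sub_self]
      exact (ZMod.intCast_zmod_eq_zero_iff_dvd _ 3).mp h2
    have hdp : ∀ j, (3 : ℤ) ∣ (p l j - p k j) := by
      intro j
      have h1 : ((p k j : ℤ) : ZMod 3) = ((p l j : ℤ) : ZMod 3) :=
        congrFun (congrArg Prod.snd hfkl) j
      have h2 : ((p l j - p k j : ℤ) : ZMod 3) = 0 := by
        rw [Int.cast_sub, ← h1, sub_self]
      exact (ZMod.intCast_zmod_eq_zero_iff_dvd _ 3).mp h2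
    set wy : Fin n → ℤ := fun i' => (y l i' - y k i') / 3 with hwy
    set wp : Fin m → ℤ := fun j => (p l j - p k j) / 3 with hwp
    have hwy3 : ∀ i', (wy i' : ℝ) = ((y l i' : ℝ) - (y k i' : ℝ)) / 3 := by
      intro i'
      have h1 : (wy i' : ℝ) * 3 = (y l i' : ℝ) - (y k i' : ℝ) := by
        exact_mod_cast congrArg (Int.cast : ℤ → ℝ) (Int.ediv_mul_cancel (hdy i'))
      linarith
    have hwp3 : ∀ j, (wp j : ℝ) = ((p l j : ℝ) - (p k j : ℝ)) / 3 := by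
      intro j
      have h1 : (wp j : ℝ) * 3 = (p l j : ℝ) - (p k j : ℝ) := by
        exact_mod_cast congrArg (Int.cast : ℤ → ℝ) (Int.ediv_mul_cancel (hdp j))
      linarith
    have hwyne : wy ≠ 0 := by
      intro h
      have hyeq : y l = y k := by
        funext i'
        have h1 : wy i' = 0 := congrFun h i'
        have h2 : wy i' * 3 = y l i' - y k i' := Int.ediv_mul_cancel (hdy i')
        rw [h1] at h2
        omega
      have h3 := hYlt k l hk1 hkl
      rw [hyeq] at h3
      exact lt_irrefl _ h3
    have hMb : ∀ j, |(∑ i', A i' j * (wy i' : ℝ)) - (wp j : ℝ)| ≤ 2 / 3 * Mlin A (y k) := by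
      intro j
      have s1 : ∑ i', A i' j * (wy i' : ℝ)
          = ((∑ i', A i' j * (y l i' : ℝ)) - (∑ i', A i' j * (y k i' : ℝ))) / 3 := by
        rw [← Finset.sum_sub_distrib, Finset.sum_div]
        exact Finset.sum_congr rfl fun i' _ => by rw [hwy3]; ring
      have e1 : (∑ i', A i' j * (wy i' : ℝ)) - (wp j : ℝ)
          = (((∑ i', A i' j * (y l i' : ℝ)) - (p l j : ℝ))
             - ((∑ i', A i' j * (y k i' : ℝ)) - (p k j : ℝ))) / 3 := by
        rw [s1, hwp3]; ring
      rw [e1, abs_div]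
      have h3 : |(3 : ℝ)| = 3 := by norm_num
      rw [h3]
      have h1 := hd_le k j
      have h2 := hd_le l j
      have h4 := hMle k l hk1 hkl.le
      have h5 := abs_sub ((∑ i', A i' j * (y l i' : ℝ)) - (p l j : ℝ))
        ((∑ i', A i' j * (y k i' : ℝ)) - (p k j : ℝ))
      linarith
    have hsup : supNormZ wy < supNormZ (y (k + 1)) := by
      have hl2 : supNormZ (y l) < 2 * supNormZ (y (i + 1)) := by
        have h0 := hYle l (i + N) hl1 hl.2
        linarith
      have hik : supNormZ (y (i + 1)) ≤ supNormZ (y k) := hYle (i + 1) k (by omega) (by omega)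
      have h1 : supNormZ wy ≤ (supNormZ (y l) + supNormZ (y k)) / 3 := by
        apply supNormZ_le
        intro i'
        rw [hwy3, abs_div]
        have h2 := le_supNormZ (y l) i'
        have h3 := le_supNormZ (y k) i'
        have h4 : |(3 : ℝ)| = 3 := by norm_num
        rw [h4]
        have h5 := abs_sub ((y l i' : ℝ)) ((y k i' : ℝ))
        linarith
      have h6 := hYlt k (k + 1) hk1 (Nat.lt_succ_self k)
      linarith
    exact key k hk1 wy wp hwyne hMb hsup
  -- pigeonhole
  have hcards : (Finset.Ioc i (i + N)).card = N := by
    simp [Nat.card_Ioc]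
  have hcardt : (Finset.univ.erase
      (0 : (Fin n → ZMod 3) × (Fin m → ZMod 3))).card = 3 ^ (m + n) - 1 := by
    rw [Finset.card_erase_of_mem (Finset.mem_univ _), Finset.card_univ]
    have hcP : Fintype.card ((Fin n → ZMod 3) × (Fin m → ZMod 3)) = 3 ^ (m + n) := by
      simp only [Fintype.card_prod, Fintype.card_fun, ZMod.card, Fintype.card_fin]
      rw [← pow_add, Nat.add_comm]
    rw [hcP]
  have hltc : (Finset.univ.erase
      (0 : (Fin n → ZMod 3) × (Fin m → ZMod 3))).card < (Finset.Ioc i (i + N)).card := by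
    rw [hcards, hcardt, hNdef]
    have h0 : 0 < 3 ^ (m + n) := pow_pos (by norm_num) _
    omega
  obtain ⟨a, ha, b, hb, hab, hfab⟩ :=
    Finset.exists_ne_map_eq_of_card_lt_of_maps_to hltc hmapsto
  rcases hab.lt_or_gt with h | h
  · exact main a b ha hb h hfab
  · exact main b a hb ha h hfab.symm
end
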